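/- arXiv:2103.01727 — 9 statements merged into one kernel-verified Lean document; each statement's English description precedes it below -/
import Mathlib

section
/- For each n ∈ ℕ and α ∈ [0,1], the function φ_{n,α}(t) = Σ_{j=1+⌊(n-1)α⌋}^{n} C(n,j) t^j (1-t)^{n-j} is strictly increasing on (0,1), satisfies φ_{n,α}(0)=0 and φ_{n,α}(1)=1 (hence is a distortion function), and its derivative φ'_{n,α} is increasing on (0, ⌊(n-1)α⌋/(n-1)) and decreasing on (⌊(n-1)α⌋/(n-1), 1). -/
open MeasureTheory Set Filter


lemma aux1 (m : ℕ) (t : ℝ) :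
    HasDerivAt (fun t : ℝ => (1 - t) ^ m) (-((m : ℝ) * (1 - t) ^ (m - 1))) t := by
  have h := (hasDerivAt_pow m (1 - t)).comp t ((hasDerivAt_id t).const_sub 1)
  simpa [mul_comm, Function.comp_def] using h

lemma aux2 (c : ℝ) (a b : ℕ) (t : ℝ) :
    HasDerivAt (fun t : ℝ => c * t ^ a * (1 - t) ^ b)
      (c * ((a : ℝ) * t ^ (a - 1) * (1 - t) ^ b) -
        c * ((b : ℝ) * t ^ a * (1 - t) ^ (b - 1))) t := by
  have h := (((hasDerivAt_pow a t).const_mul c).mul (aux1 b t))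
  exact h.congr_deriv (by ring)

lemma nat_id1 (s i : ℕ) : (s + 1).choose (i + 1) * (i + 1) = (s + 1) * s.choose i := by
  rw [← Nat.add_one_mul_choose_eq]

lemma nat_id2 (s j : ℕ) : (s + 1).choose j * (s + 1 - j) = (s + 1) * s.choose j := by
  rw [← Nat.choose_mul_succ_eq]; ring

lemma aux3 (n k : ℕ) (hn : 1 ≤ n) (hk : k ≤ n - 1) (t : ℝ) :
    HasDerivAt
      (fun t : ℝ => ∑ j ∈ Finset.Icc (1 + k) n, (n.choose j : ℝ) * t ^ j * (1 - t) ^ (n - j))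
      ((n : ℝ) * ((n - 1).choose k : ℝ) * t ^ k * (1 - t) ^ (n - 1 - k)) t := by
  obtain ⟨s, rfl⟩ : ∃ s, n = s + 1 := ⟨n - 1, by omega⟩
  set B : ℕ → ℝ := fun i => (s.choose i : ℝ) * t ^ i * (1 - t) ^ (s - i) with hB
  have key : ∀ j ∈ Finset.Icc (1 + k) (s + 1),
      HasDerivAt (fun t : ℝ => ((s + 1).choose j : ℝ) * t ^ j * (1 - t) ^ (s + 1 - j))
        (((s : ℝ) + 1) * (B (j - 1) - B j)) t := by
    intro j hj
    simp only [Finset.mem_Icc] at hj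
    obtain ⟨i, rfl⟩ : ∃ i, j = i + 1 := ⟨j - 1, by omega⟩
    have hi : i ≤ s := by omega
    have h := aux2 (((s + 1).choose (i + 1) : ℝ)) (i + 1) (s + 1 - (i + 1)) t
    convert h using 1
    have e1 : ((s + 1).choose (i + 1) : ℝ) * ((i : ℝ) + 1) = ((s : ℝ) + 1) * s.choose i := by
      exact_mod_cast congrArg (Nat.cast (R := ℝ)) (nat_id1 s i)
    have e2 : ((s + 1).choose (i + 1) : ℝ) * ((s : ℝ) - i) = ((s : ℝ) + 1) * s.choose (i + 1) := by
      have h2 := congrArg (Nat.cast (R := ℝ)) (nat_id2 s (i + 1))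
      push_cast [Nat.cast_sub (show i + 1 ≤ s + 1 by omega), Nat.cast_sub hi] at h2
      linarith [h2]
    have eexp1 : s + 1 - (i + 1) = s - i := by omega
    have eexp2 : s + 1 - (i + 1) - 1 = s - i - 1 := by omega
    have eexp3 : s - (i + 1) = s - i - 1 := by omega
    have ecast : ((s + 1 - (i + 1) : ℕ) : ℝ) = (s : ℝ) - i := by
      rw [eexp1]; exact Nat.cast_sub hi
    simp only [hB, eexp1, eexp2, eexp3, ecast, Nat.add_sub_cancel]
    push_cast [Nat.cast_sub hi]
    linear_combination (t ^ (i + 1) * (1 - t) ^ (s - i - 1)) * e2 - (t ^ i * (1 - t) ^ (s - i)) * e1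
  have hsum := HasDerivAt.fun_sum key
  refine hsum.congr_deriv ?_
  have hIcc : Finset.Icc (1 + k) (s + 1) = Finset.Ico (1 + k) (s + 2) := by
    rw [← Finset.Ico_add_one_right_eq_Icc]; rfl
  have htel : ∑ j ∈ Finset.Icc (1 + k) (s + 1), ((s : ℝ) + 1) * (B (j - 1) - B j)
      = ((s : ℝ) + 1) * (B k - B (s + 1)) := by
    rw [← Finset.mul_sum]
    congr 1
    rw [hIcc, Finset.sum_Ico_eq_sum_range]
    have hr : s + 2 - (1 + k) = s + 1 - k := by omega
    rw [hr]
    have hterm : ∀ i, B (1 + k + i - 1) - B (1 + k + i) = B (k + i) - B (k + (i + 1)) := by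
      intro i; congr 2 <;> omega
    simp only [hterm]
    rw [Finset.sum_range_sub' (fun i => B (k + i))]
    congr 2
    omega
  rw [htel]
  have hBs : B (s + 1) = 0 := by
    simp [hB, Nat.choose_eq_zero_of_lt (by omega : s < s + 1)]
  rw [hBs]
  simp only [hB, Nat.add_sub_cancel]
  push_cast
  ring

lemma aux4 (c : ℝ) (hc : 0 < c) (a b : ℕ) (t : ℝ) (ht0 : 0 < t) (ht1 : t < 1)
    (hkey : (b : ℝ) * t ≤ (a : ℝ) * (1 - t)) :
    0 ≤ c * ((a : ℝ) * t ^ (a - 1) * (1 - t) ^ b) -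
        c * ((b : ℝ) * t ^ a * (1 - t) ^ (b - 1)) := by
  rcases Nat.eq_zero_or_pos a with ha | ha
  · have hb : b = 0 := by
      subst ha
      by_contra hb
      have hb1 : (1 : ℝ) ≤ (b : ℝ) := by exact_mod_cast Nat.one_le_iff_ne_zero.mpr hb
      simp at hkey
      nlinarith
    subst ha; subst hb; simp
  rcases Nat.eq_zero_or_pos b with hb | hb
  · subst hb
    have h2 : (0:ℝ) ≤ c * ((a : ℝ) * t ^ (a - 1) * (1 - t) ^ 0) :=
      mul_nonneg hc.le (mul_nonneg (mul_nonneg (Nat.cast_nonneg a) (pow_pos ht0 _).le)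
        (pow_nonneg (by linarith) 0))
    simpa using h2
  obtain ⟨a', rfl⟩ : ∃ a', a = a' + 1 := ⟨a - 1, by omega⟩
  obtain ⟨b', rfl⟩ : ∃ b', b = b' + 1 := ⟨b - 1, by omega⟩
  simp only [Nat.add_sub_cancel, pow_succ]
  have hta : (0:ℝ) < t ^ a' := pow_pos ht0 _
  have htb : (0:ℝ) < (1 - t) ^ b' := pow_pos (by linarith) _
  push_cast at hkey ⊢
  nlinarith [mul_le_mul_of_nonneg_left hkey (mul_pos (mul_pos hc hta) htb).le]

lemma aux6 (c : ℝ) (hc : 0 < c) (a b : ℕ) (hab : 0 < a + b) :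
    MonotoneOn (fun t : ℝ => c * t ^ a * (1 - t) ^ b)
      (Set.Ioo (0 : ℝ) ((a : ℝ) / ((a : ℝ) + b))) := by
  rcases Nat.eq_zero_or_pos a with ha | ha
  · have he : Set.Ioo (0 : ℝ) ((a : ℝ) / ((a : ℝ) + b)) = ∅ := by
      subst ha; simp
    rw [he]; exact fun x hx => absurd hx (Set.notMem_empty x)
  have ha1 : (1:ℝ) ≤ (a:ℝ) := by exact_mod_cast ha
  have hab' : (0:ℝ) < (a:ℝ) + b := by
    have : (0:ℝ) ≤ (b:ℝ) := Nat.cast_nonneg b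
    linarith
  apply monotoneOn_of_deriv_nonneg (convex_Ioo _ _)
  · exact fun t _ => ((aux2 c a b t).differentiableAt.continuousAt).continuousWithinAt
  · rw [interior_Ioo]
    exact fun t _ => (aux2 c a b t).differentiableAt.differentiableWithinAt
  · rw [interior_Ioo]
    intro t ht
    rw [(aux2 c a b t).deriv]
    obtain ⟨ht0, ht1⟩ := ht
    have hd1 : (a:ℝ) / ((a:ℝ) + b) ≤ 1 := by
      rw [div_le_one hab']
      have : (0:ℝ) ≤ (b:ℝ) := Nat.cast_nonneg b
      linarith
    have htlt1 : t < 1 := lt_of_lt_of_le ht1 hd1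
    have hkey : (b : ℝ) * t ≤ (a : ℝ) * (1 - t) := by
      have h2 : t * ((a:ℝ) + b) < a := (lt_div_iff₀ hab').mp ht1
      nlinarith
    exact aux4 c hc a b t ht0 htlt1 hkey

lemma aux7 (c : ℝ) (hc : 0 < c) (a b : ℕ) (hab : 0 < a + b) :
    AntitoneOn (fun t : ℝ => c * t ^ a * (1 - t) ^ b)
      (Set.Ioo ((a : ℝ) / ((a : ℝ) + b)) (1 : ℝ)) := by
  have hab' : (0:ℝ) < (a:ℝ) + b := by exact_mod_cast hab
  rcases Nat.eq_zero_or_pos b with hb | hb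
  · have he : Set.Ioo ((a : ℝ) / ((a : ℝ) + b)) (1 : ℝ) = ∅ := by
      subst hb
      simp only [Nat.cast_zero, add_zero]
      rw [div_self (by positivity : (a:ℝ) ≠ 0)]
      · simp
    rw [he]; exact fun x hx => absurd hx (Set.notMem_empty x)
  have hb1 : (1:ℝ) ≤ (b:ℝ) := by exact_mod_cast hb
  apply antitoneOn_of_deriv_nonpos (convex_Ioo _ _)
  · exact fun t _ => ((aux2 c a b t).differentiableAt.continuousAt).continuousWithinAt
  · rw [interior_Ioo]
    exact fun t _ => (aux2 c a b t).differentiableAt.differentiableWithinAt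
  · rw [interior_Ioo]
    intro t ht
    rw [(aux2 c a b t).deriv]
    obtain ⟨ht0, ht1⟩ := ht
    have hd0 : (0:ℝ) ≤ (a:ℝ) / ((a:ℝ) + b) := by positivity
    have ht0' : (0:ℝ) < t := lt_of_le_of_lt hd0 ht0
    have hkey : (a : ℝ) * (1 - t) ≤ (b : ℝ) * t := by
      have h2 : (a:ℝ) < t * ((a:ℝ) + b) := (div_lt_iff₀ hab').mp ht0
      nlinarith
    have h := aux4 c hc b a (1 - t) (by linarith) (by linarith) (by ring_nf; ring_nf at hkey; linarith)
    simp only [show (1:ℝ) - (1 - t) = t from by ring] at h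
    ring_nf at h ⊢
    linarith



noncomputable def phi (n : ℕ) (α : ℝ) (t : ℝ) : ℝ :=
  ∑ j ∈ Finset.Icc (1 + (⌊((n : ℝ) - 1) * α⌋).toNat) n,
    (n.choose j : ℝ) * t ^ j * (1 - t) ^ (n - j)

noncomputable def dphi (n : ℕ) (α : ℝ) (t : ℝ) : ℝ :=
  (n : ℝ) * ((n - 1).choose ((⌊((n : ℝ) - 1) * α⌋).toNat) : ℝ) *
    t ^ ((⌊((n : ℝ) - 1) * α⌋).toNat) * (1 - t) ^ (n - 1 - (⌊((n : ℝ) - 1) * α⌋).toNat)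

/-- `φ_{n,α}` satisfies `φ(0)=0`, `φ(1)=1`, is strictly increasing on `(0,1)`
(hence a distortion function), and its derivative `φ'_{n,α}` is increasing on
`(0, ⌊(n-1)α⌋/(n-1))` and decreasing on `(⌊(n-1)α⌋/(n-1), 1)`. -/
theorem stmt3 (n : ℕ) (hn : 2 ≤ n) (α : ℝ) (hα : α ∈ Set.Icc (0:ℝ) 1) :
    phi n α 0 = 0 ∧ phi n α 1 = 1 ∧
    StrictMonoOn (phi n α) (Set.Ioo (0:ℝ) 1) ∧
    MonotoneOn (dphi n α)
      (Set.Ioo (0:ℝ) ((⌊((n : ℝ) - 1) * α⌋ : ℝ) / ((n : ℝ) - 1))) ∧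
    AntitoneOn (dphi n α)
      (Set.Ioo ((⌊((n : ℝ) - 1) * α⌋ : ℝ) / ((n : ℝ) - 1)) 1) := by

  obtain ⟨hα0, hα1⟩ := hα
  have hn1R : (1:ℝ) ≤ (n:ℝ) := by exact_mod_cast (by omega : 1 ≤ n)
  set K : ℤ := ⌊((n : ℝ) - 1) * α⌋ with hK
  set k : ℕ := K.toNat with hkdef
  have hK0 : 0 ≤ K := Int.floor_nonneg.mpr (by nlinarith)
  have hKcast : ((K : ℤ) : ℝ) = (k : ℝ) := by
    rw [hkdef]; exact_mod_cast (Int.toNat_of_nonneg hK0).symm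
  have hkle : k ≤ n - 1 := by
    have h1 : ((n:ℝ) - 1) * α ≤ (((n - 1 : ℕ) : ℤ) : ℝ) := by
      push_cast [Nat.cast_sub (by omega : 1 ≤ n)]
      nlinarith
    have h2 : K ≤ ((n - 1 : ℕ) : ℤ) := by rw [hK]; exact le_trans (Int.floor_le_floor h1) (le_of_eq (Int.floor_intCast _))
    rw [hkdef]
    exact_mod_cast Int.toNat_le.mpr h2
  set m : ℕ := n - 1 - k with hmdef
  have hkm : k + m = n - 1 := by omega
  have hcast_nm : (k : ℝ) + (m : ℝ) = (n : ℝ) - 1 := by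
    have : ((k + m : ℕ) : ℝ) = ((n - 1 : ℕ) : ℝ) := by rw [hkm]
    push_cast [Nat.cast_sub (by omega : 1 ≤ n)] at this
    linarith
  have hchoose : (0:ℝ) < ((n - 1).choose k : ℝ) := by exact_mod_cast Nat.choose_pos hkle
  have hc : (0:ℝ) < (n : ℝ) * ((n - 1).choose k : ℝ) := by
    have : (0:ℝ) < (n:ℝ) := by linarith
    positivity
  have hderiv_phi : ∀ t : ℝ, HasDerivAt (phi n α) (dphi n α t) t := by
    intro t
    have h := aux3 n k (by omega) hkle t
    exact h
  refine ⟨?_, ?_, ?_, ?_, ?_⟩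
  · -- phi 0 = 0
    rw [phi]
    apply Finset.sum_eq_zero
    intro j hj
    rw [Finset.mem_Icc] at hj
    rw [zero_pow (by omega : j ≠ 0)]
    ring
  · -- phi 1 = 1
    rw [phi]
    rw [Finset.sum_eq_single n]
    · simp
    · intro j hj hjn
      rw [Finset.mem_Icc] at hj
      rw [show (1:ℝ) - 1 = 0 from by ring, zero_pow (by omega : n - j ≠ 0)]
      ring
    · intro hnot
      exact absurd (Finset.mem_Icc.mpr ⟨by omega, le_refl n⟩) hnot
  · -- strict mono
    apply strictMonoOn_of_deriv_pos (convex_Ioo 0 1)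
    · exact fun t _ => ((hderiv_phi t).differentiableAt.continuousAt).continuousWithinAt
    · rw [interior_Ioo]
      intro t ht
      rw [(hderiv_phi t).deriv]
      rw [dphi]
      rw [← hK, ← hkdef]
      exact mul_pos (mul_pos hc (pow_pos ht.1 _)) (pow_pos (by linarith [ht.2]) _)
  · -- monotone
    have hset : Set.Ioo (0:ℝ) (((K : ℤ) : ℝ) / ((n : ℝ) - 1))
        = Set.Ioo (0:ℝ) ((k : ℝ) / ((k : ℝ) + m)) := by
      rw [hKcast, hcast_nm]
    rw [hset]
    have h := aux6 ((n : ℝ) * ((n - 1).choose k : ℝ)) hc k m (by omega)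
    have hfun : dphi n α = fun t : ℝ => (n : ℝ) * ((n - 1).choose k : ℝ) * t ^ k * (1 - t) ^ m := by
      funext t
      rw [dphi, ← hK, ← hkdef, ← hmdef]
    rw [hfun]
    exact h
  · -- antitone
    have hset : Set.Ioo (((K : ℤ) : ℝ) / ((n : ℝ) - 1)) (1:ℝ)
        = Set.Ioo ((k : ℝ) / ((k : ℝ) + m)) (1:ℝ) := by
      rw [hKcast, hcast_nm]
    rw [hset]
    have h := aux7 ((n : ℝ) * ((n - 1).choose k : ℝ)) hc k m (by omega)
    have hfun : dphi n α = fun t : ℝ => (n : ℝ) * ((n - 1).choose k : ℝ) * t ^ k * (1 - t) ^ m := by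
      funext t
      rw [dphi, ← hK, ← hkdef, ← hmdef]
    rw [hfun]
    exact h
end

section
/- Let γ ∈ [0,1] and define ξ_γ : (0,1)×(0,1) → ℝ by ξ_γ(t,s) = (t/s)^γ · ((1-t)/(1-s))^{1-γ}. If 0 < t < s ≤ γ or 1 > t > s ≥ γ, then ξ_γ(t,s) < 1. -/
open Set

lemma aux4_s4 (a b γ : ℝ) (ha : 0 < a) (hb : 0 < b) (hγ0 : 0 < γ) (hγ1 : γ < 1)
    (hab : a ≠ b) (hsum : γ * a + (1 - γ) * b ≤ 1) :
    a ^ γ * b ^ (1 - γ) < 1 := by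
  have hcomb : 0 < γ * a + (1 - γ) * b := by nlinarith
  have hlog : γ * Real.log a + (1 - γ) * Real.log b <
      Real.log (γ * a + (1 - γ) * b) := by
    have := strictConcaveOn_log_Ioi.2 (Set.mem_Ioi.2 ha) (Set.mem_Ioi.2 hb) hab hγ0
      (sub_pos.2 hγ1) (add_sub_cancel γ 1)
    simpa [smul_eq_mul] using this
  have hlog2 : Real.log (γ * a + (1 - γ) * b) ≤ 0 :=
    Real.log_nonpos (le_of_lt hcomb) hsum
  have hneg : γ * Real.log a + (1 - γ) * Real.log b < 0 := lt_of_lt_of_le hlog hlog2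
  have : a ^ γ * b ^ (1 - γ) = Real.exp (γ * Real.log a + (1 - γ) * Real.log b) := by
    rw [Real.rpow_def_of_pos ha, Real.rpow_def_of_pos hb, ← Real.exp_add]
    ring_nf
  rw [this]
  calc Real.exp (γ * Real.log a + (1 - γ) * Real.log b) < Real.exp 0 :=
        Real.exp_lt_exp.2 hneg
    _ = 1 := Real.exp_zero

/-- For `γ ∈ [0,1]` and `ξ_γ(t,s) = (t/s)^γ ((1-t)/(1-s))^{1-γ}`:
if `0 < t < s ≤ γ` or `1 > t > s ≥ γ`, then `ξ_γ(t,s) < 1`. -/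
theorem stmt4 (γ t s : ℝ) (hγ : γ ∈ Set.Icc (0:ℝ) 1)
    (ht : t ∈ Set.Ioo (0:ℝ) 1) (hs : s ∈ Set.Ioo (0:ℝ) 1)
    (h : (t < s ∧ s ≤ γ) ∨ (s < t ∧ γ ≤ s)) :
    (t / s) ^ γ * ((1 - t) / (1 - s)) ^ (1 - γ) < 1 := by
  obtain ⟨ht0, ht1⟩ := ht
  obtain ⟨hs0, hs1⟩ := hs
  obtain ⟨hγ0, hγ1⟩ := hγ
  have ha : 0 < t / s := div_pos ht0 hs0
  have hb : 0 < (1 - t) / (1 - s) := div_pos (by linarith) (by linarith)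
  rcases h with ⟨hts, hsγ⟩ | ⟨hst, hγs⟩
  · -- t < s ≤ γ
    rcases eq_or_lt_of_le hγ1 with h1 | h1
    · -- γ = 1
      subst h1
      simp only [sub_self, Real.rpow_zero, mul_one, Real.rpow_one]
      exact (div_lt_one hs0).2 hts
    · have hγ0' : 0 < γ := lt_of_lt_of_le hs0 hsγ
      have hab : t / s ≠ (1 - t) / (1 - s) := by
        have h1 : t / s < 1 := (div_lt_one hs0).2 hts
        have h2 : 1 < (1 - t) / (1 - s) := (one_lt_div (by linarith)).2 (by linarith)
        linarith
      apply aux4_s4 _ _ _ ha hb hγ0' h1 hab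
      have h1s : (1:ℝ) - s ≠ 0 := by linarith
      have key : γ * (t / s) + (1 - γ) * ((1 - t) / (1 - s)) - 1
          = (t - s) * (γ - s) / (s * (1 - s)) := by
        field_simp
        ring
      have hnum : (t - s) * (γ - s) ≤ 0 :=
        mul_nonpos_of_nonpos_of_nonneg (by linarith) (by linarith)
      have hden : 0 < s * (1 - s) := mul_pos hs0 (by linarith)
      nlinarith [div_nonpos_of_nonpos_of_nonneg hnum (le_of_lt hden)]
  · -- γ ≤ s < t
    rcases eq_or_lt_of_le hγ0 with h0 | h0
    · -- γ = 0
      rw [← h0, Real.rpow_zero, one_mul, sub_zero, Real.rpow_one]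
      exact (div_lt_one (by linarith)).2 (by linarith)
    · have hγ1' : γ < 1 := lt_of_le_of_lt hγs hs1
      have hab : t / s ≠ (1 - t) / (1 - s) := by
        have h1 : 1 < t / s := (one_lt_div hs0).2 hst
        have h2 : (1 - t) / (1 - s) < 1 := (div_lt_one (by linarith)).2 (by linarith)
        linarith
      apply aux4_s4 _ _ _ ha hb h0 hγ1' hab
      have h1s : (1:ℝ) - s ≠ 0 := by linarith
      have key : γ * (t / s) + (1 - γ) * ((1 - t) / (1 - s)) - 1
          = (t - s) * (γ - s) / (s * (1 - s)) := by
        field_simp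
        ring
      have hnum : (t - s) * (γ - s) ≤ 0 :=
        mul_nonpos_of_nonneg_of_nonpos (by linarith) (by linarith)
      have hden : 0 < s * (1 - s) := mul_pos hs0 (by linarith)
      nlinarith [div_nonpos_of_nonpos_of_nonneg hnum (le_of_lt hden)]
end

section
/- Let γ_n → γ ∈ [0,1] with |γ_n - γ| = O(1/n), and suppose 0 < t < s < γ or 1 > t > s > γ. Then lim_{n→∞} φ'_{n,γ_n}(t)/φ'_{n,γ_n}(s) = 0, where φ'_{n,α}(t) = n·C(n-1,⌊(n-1)α⌋)·t^{⌊(n-1)α⌋}(1-t)^{n-1-⌊(n-1)α⌋}. -/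
open MeasureTheory Set Filter

set_option maxHeartbeats 1000000 in
/-- If `γ_n → γ ∈ [0,1]` with `|γ_n - γ| = O(1/n)` and `0 < t < s < γ` or `1 > t > s > γ`,
then `φ'_{n,γ_n}(t)/φ'_{n,γ_n}(s) → 0` as `n → ∞`. -/
theorem stmt6 (γ : ℝ) (hγ : γ ∈ Set.Icc (0:ℝ) 1)
    (γseq : ℕ → ℝ) (hseq : ∀ n, γseq n ∈ Set.Icc (0:ℝ) 1)
    (htend : Tendsto γseq atTop (nhds γ))
    (hrate : ∃ K > (0:ℝ), ∃ N : ℕ, ∀ n ≥ N, |γseq n - γ| ≤ K / n)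
    (t s : ℝ)
    (h : (0 < t ∧ t < s ∧ s < γ) ∨ (γ < s ∧ s < t ∧ t < 1)) :
    Tendsto (fun n : ℕ => dphi n (γseq n) t / dphi n (γseq n) s) atTop (nhds 0) := by
  obtain ⟨K, hK, N, hN⟩ := hrate
  obtain ⟨hγ0, hγ1⟩ := hγ
  -- basic position facts
  have ht0 : 0 < t := by rcases h with ⟨h1, h2, h3⟩ | ⟨h1, h2, h3⟩ <;> linarith
  have ht1 : t < 1 := by rcases h with ⟨h1, h2, h3⟩ | ⟨h1, h2, h3⟩ <;> linarith
  have hs0 : 0 < s := by rcases h with ⟨h1, h2, h3⟩ | ⟨h1, h2, h3⟩ <;> linarith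
  have hs1 : s < 1 := by rcases h with ⟨h1, h2, h3⟩ | ⟨h1, h2, h3⟩ <;> linarith
  have h1t : 0 < 1 - t := by linarith
  have h1s : 0 < 1 - s := by linarith
  set La : ℝ := Real.log t - Real.log s with hLa_def
  set Lb : ℝ := Real.log (1 - t) - Real.log (1 - s) with hLb_def
  set c : ℝ := γ * La + (1 - γ) * Lb with hc_def
  -- the key negativity of c
  have hlogt : Real.log (t / s) = La := Real.log_div ht0.ne' hs0.ne'
  have hlog1t : Real.log ((1 - t) / (1 - s)) = Lb := Real.log_div h1t.ne' h1s.ne'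
  have key1le : s * La ≤ t - s := by
    have h' : Real.log (t / s) ≤ t / s - 1 := Real.log_le_sub_one_of_pos (div_pos ht0 hs0)
    rw [hlogt] at h'
    have hmul := mul_le_mul_of_nonneg_left h' hs0.le
    have heq : s * (t / s - 1) = t - s := by field_simp
    exact hmul.trans heq.le
  have key2le : (1 - s) * Lb ≤ s - t := by
    have h' : Real.log ((1 - t) / (1 - s)) ≤ (1 - t) / (1 - s) - 1 :=
      Real.log_le_sub_one_of_pos (div_pos h1t h1s)
    rw [hlog1t] at h'
    have hmul := mul_le_mul_of_nonneg_left h' h1s.le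
    have heq : (1 - s) * ((1 - t) / (1 - s) - 1) = s - t := by field_simp; ring
    exact hmul.trans heq.le
  have hc : c < 0 := by
    rcases h with ⟨h1, h2, h3⟩ | ⟨h1, h2, h3⟩
    · -- 0 < t < s < γ ; γ > 0, use strictness in first term
      have hγpos : 0 < γ := by linarith
      have hne : t / s ≠ 1 := by
        intro hEq
        have : t = s := by field_simp at hEq; linarith
        linarith
      have key1 : s * La < t - s := by
        have h' : Real.log (t / s) < t / s - 1 :=
          Real.log_lt_sub_one_of_pos (div_pos ht0 hs0) hne
        rw [hlogt] at h'
        have hmul := mul_lt_mul_of_pos_left h' hs0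
        have heq : s * (t / s - 1) = t - s := by field_simp
        exact heq ▸ hmul
      -- multiply key1 by γ(1-s) > 0 and key2le by (1-γ)s ≥ 0
      have p1 : (0:ℝ) < γ * (1 - s) := mul_pos hγpos h1s
      have p2 : (0:ℝ) ≤ (1 - γ) * s := mul_nonneg (by linarith) hs0.le
      have m1 := mul_lt_mul_of_pos_left key1 p1
      have m2 := mul_le_mul_of_nonneg_left key2le p2
      have hss : (0:ℝ) < s * (1 - s) := mul_pos hs0 h1s
      nlinarith [m1, m2, hss, mul_pos (sub_pos.mpr h2) (sub_pos.mpr h3)]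
    · -- γ < s < t < 1 ; 1 - γ > 0, use strictness in second term
      have hγlt : γ < 1 := by linarith
      have hne : (1 - t) / (1 - s) ≠ 1 := by
        intro hEq
        have : 1 - t = 1 - s := by field_simp at hEq; linarith
        linarith
      have key2 : (1 - s) * Lb < s - t := by
        have h' : Real.log ((1 - t) / (1 - s)) < (1 - t) / (1 - s) - 1 :=
          Real.log_lt_sub_one_of_pos (div_pos h1t h1s) hne
        rw [hlog1t] at h'
        have hmul := mul_lt_mul_of_pos_left h' h1s
        have heq : (1 - s) * ((1 - t) / (1 - s) - 1) = s - t := by field_simp; ring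
        exact heq ▸ hmul
      have p1 : (0:ℝ) ≤ γ * (1 - s) := mul_nonneg hγ0 h1s.le
      have p2 : (0:ℝ) < (1 - γ) * s := mul_pos (by linarith) hs0
      have m1 := mul_le_mul_of_nonneg_left key1le p1
      have m2 := mul_lt_mul_of_pos_left key2 p2
      have hss : (0:ℝ) < s * (1 - s) := mul_pos hs0 h1s
      nlinarith [m1, m2, hss, mul_pos (sub_pos.mpr h2) (sub_pos.mpr h1)]
  -- notation for the floor index
  set k : ℕ → ℕ := fun n => (⌊((n : ℝ) - 1) * γseq n⌋).toNat with hk_def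
  have hkle : ∀ n : ℕ, 1 ≤ n → k n ≤ n - 1 := by
    intro n hn
    have hx : ((n : ℝ) - 1) * γseq n ≤ ((n - 1 : ℕ) : ℝ) := by
      have hcast : ((n - 1 : ℕ) : ℝ) = (n : ℝ) - 1 := by
        push_cast [hn]; ring
      rw [hcast]
      have hn1 : (0:ℝ) ≤ (n : ℝ) - 1 := by
        have : (1:ℝ) ≤ (n:ℝ) := by exact_mod_cast hn
        linarith
      nlinarith [(hseq n).2, (hseq n).1]
    have hfl : ⌊((n : ℝ) - 1) * γseq n⌋ ≤ ((n - 1 : ℕ) : ℤ) := by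
      have := Int.floor_le_floor hx
      rwa [Int.floor_natCast] at this
    exact Int.toNat_le.mpr hfl
  have hkcast : ∀ n : ℕ, 1 ≤ n → ((k n : ℝ)) = (⌊((n : ℝ) - 1) * γseq n⌋ : ℝ) := by
    intro n hn
    have hx0 : (0:ℝ) ≤ ((n : ℝ) - 1) * γseq n := by
      have : (1:ℝ) ≤ (n:ℝ) := by exact_mod_cast hn
      nlinarith [(hseq n).1]
    have h0 : (0:ℤ) ≤ ⌊((n : ℝ) - 1) * γseq n⌋ := Int.floor_nonneg.mpr hx0
    simp only [hk_def]
    exact_mod_cast congrArg (Int.cast : ℤ → ℝ) (Int.toNat_of_nonneg h0)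
  set f : ℕ → ℝ := fun n => (k n : ℝ) * La + ((n - 1 - k n : ℕ) : ℝ) * Lb with hf_def
  -- the ratio equals exp (f n) for n ≥ 1
  have hEq : (fun n : ℕ => dphi n (γseq n) t / dphi n (γseq n) s) =ᶠ[atTop]
      (fun n => Real.exp (f n)) := by
    filter_upwards [eventually_ge_atTop 1] with n hn
    have hC : (0:ℝ) < ((n - 1).choose (k n) : ℝ) := by
      exact_mod_cast Nat.choose_pos (hkle n hn)
    have hn0 : (0:ℝ) < (n : ℝ) := by exact_mod_cast hn
    have hA : (0:ℝ) < (n : ℝ) * ((n - 1).choose (k n) : ℝ) := mul_pos hn0 hC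
    have hdt : dphi n (γseq n) t =
        ((n : ℝ) * ((n - 1).choose (k n) : ℝ)) * (t ^ (k n) * (1 - t) ^ (n - 1 - k n)) := by
      simp only [dphi, hk_def]; ring
    have hds : dphi n (γseq n) s =
        ((n : ℝ) * ((n - 1).choose (k n) : ℝ)) * (s ^ (k n) * (1 - s) ^ (n - 1 - k n)) := by
      simp only [dphi, hk_def]; ring
    rw [hdt, hds, mul_div_mul_left _ _ hA.ne']
    have hexp1 : t ^ (k n) / s ^ (k n) = Real.exp ((k n : ℝ) * La) := by
      rw [Real.exp_nat_mul, hLa_def, Real.exp_sub, Real.exp_log ht0, Real.exp_log hs0,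
        div_pow]
    have hexp2 : (1 - t) ^ (n - 1 - k n) / (1 - s) ^ (n - 1 - k n) =
        Real.exp (((n - 1 - k n : ℕ) : ℝ) * Lb) := by
      rw [Real.exp_nat_mul, hLb_def, Real.exp_sub, Real.exp_log h1t, Real.exp_log h1s,
        div_pow]
    rw [hf_def, Real.exp_add, ← hexp1, ← hexp2]
    rw [div_mul_div_comm]
  -- f tends to -∞
  have hf : Tendsto f atTop atBot := by
    set D : ℝ := (1 + K) * |La - Lb| with hD_def
    have hbound : ∀ᶠ n in atTop, f n ≤ ((n : ℝ) - 1) * c + D := by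
      filter_upwards [eventually_ge_atTop 1, eventually_ge_atTop N,
        eventually_ge_atTop (N + 1)] with n hn1 hnN _
      set x : ℝ := ((n : ℝ) - 1) * γseq n with hx_def
      have hn1R : (1:ℝ) ≤ (n:ℝ) := by exact_mod_cast hn1
      have hnpos : (0:ℝ) < (n:ℝ) := by linarith
      have hkx : (k n : ℝ) = (⌊x⌋ : ℝ) := hkcast n hn1
      have hkub : (k n : ℝ) ≤ x := by rw [hkx]; exact Int.floor_le x
      have hklb : x - 1 < (k n : ℝ) := by rw [hkx]; exact Int.sub_one_lt_floor x
      have he1 : |(k n : ℝ) - x| ≤ 1 := by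
        rw [abs_le]; constructor <;> linarith
      have he2 : |x - ((n : ℝ) - 1) * γ| ≤ K := by
        have : x - ((n : ℝ) - 1) * γ = ((n : ℝ) - 1) * (γseq n - γ) := by ring
        rw [this, abs_mul, abs_of_nonneg (by linarith : (0:ℝ) ≤ (n:ℝ) - 1)]
        have h1 : |γseq n - γ| ≤ K / n := hN n hnN
        have hle1 : ((n:ℝ) - 1) / n ≤ 1 := by
          rw [div_le_one hnpos]; linarith
        calc ((n:ℝ) - 1) * |γseq n - γ| ≤ ((n:ℝ) - 1) * (K / n) :=
              mul_le_mul_of_nonneg_left h1 (by linarith)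
          _ = K * (((n:ℝ) - 1) / n) := by ring
          _ ≤ K := mul_le_of_le_one_right hK.le hle1
      have he : |(k n : ℝ) - ((n : ℝ) - 1) * γ| ≤ 1 + K := by
        have hsplit : (k n : ℝ) - ((n : ℝ) - 1) * γ =
            ((k n : ℝ) - x) + (x - ((n:ℝ)-1)*γ) := by ring
        rw [hsplit]
        exact (abs_add_le _ _).trans (by linarith)
      have hmcast : ((n - 1 - k n : ℕ) : ℝ) = ((n : ℝ) - 1) - (k n : ℝ) := by
        have h1 : k n ≤ n - 1 := hkle n hn1
        rw [Nat.cast_sub h1, Nat.cast_sub hn1]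
        push_cast; ring
      have hdiff : f n - (((n : ℝ) - 1) * c) =
          ((k n : ℝ) - ((n : ℝ) - 1) * γ) * (La - Lb) := by
        simp only [hf_def, hmcast, hc_def]; ring
      have : ((k n : ℝ) - ((n : ℝ) - 1) * γ) * (La - Lb) ≤ (1 + K) * |La - Lb| := by
        calc ((k n : ℝ) - ((n : ℝ) - 1) * γ) * (La - Lb)
            ≤ |((k n : ℝ) - ((n : ℝ) - 1) * γ) * (La - Lb)| := le_abs_self _
          _ = |(k n : ℝ) - ((n : ℝ) - 1) * γ| * |La - Lb| := abs_mul _ _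
          _ ≤ (1 + K) * |La - Lb| := mul_le_mul_of_nonneg_right he (abs_nonneg _)
      linarith [hdiff]
    have hlin : Tendsto (fun n : ℕ => ((n : ℝ) - 1) * c + D) atTop atBot := by
      have h1 : Tendsto (fun n : ℕ => ((n : ℝ) - 1)) atTop atTop :=
        tendsto_atTop_add_const_right _ _ tendsto_natCast_atTop_atTop
      exact tendsto_atBot_add_const_right _ D (h1.atTop_mul_const_of_neg hc)
    exact tendsto_atBot_mono' atTop hbound hlin
  have : Tendsto (fun n => Real.exp (f n)) atTop (nhds 0) :=
    Real.tendsto_exp_atBot.comp hf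
  exact this.congr' hEq.symm
end

section
/- Let F_X, F_Y be continuous strictly increasing cdfs and A_0 = {u ∈ (0,1) : F_X^{-1}(u) > F_Y^{-1}(u)}. Fix n and a [0,1]-valued γ_n, and let A_{0,n} = {v ∈ (0,1) : F^{-1}_{X_{(1+⌊(n-1)γ_n⌋):n}}(v) > F^{-1}_{Y_{(1+⌊(n-1)γ_n⌋):n}}(v)}, where the order statistics come from iid samples of size n from F_X and F_Y respectively. Then A_{0,n} = φ_{n,γ_n}(A_0) := {φ_{n,γ_n}(u) : u ∈ A_0}. -/
open MeasureTheory Set Filter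

noncomputable def linv (F : ℝ → ℝ) (u : ℝ) : ℝ := sInf {x : ℝ | u ≤ F x}

noncomputable def aa (n j : ℕ) (t : ℝ) : ℝ :=
  (n : ℝ) * ((n-1).choose (j-1) : ℝ) * t ^ (j-1) * (1-t) ^ (n-j)

lemma choose_id1 (n j : ℕ) (hj : 1 ≤ j) :
    (n.choose j) * j = n * (n-1).choose (j-1) := by
  rcases n with _ | m
  · simp [Nat.choose_eq_zero_of_lt (by omega : 0 < j)]
  · obtain ⟨i, rfl⟩ := Nat.exists_eq_add_of_le hj
    simp only [Nat.add_sub_cancel_left, Nat.succ_sub_one]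
    rw [show 1 + i = i + 1 by omega]
    exact (Nat.add_one_mul_choose_eq m i).symm

lemma choose_id2 (n j : ℕ) (hj : j ≤ n) :
    (n.choose j) * (n - j) = n * (n-1).choose j := by
  rcases Nat.eq_or_lt_of_le hj with rfl | hlt
  · rcases j with _ | i
    · simp
    · simp [Nat.choose_eq_zero_of_lt (show i + 1 - 1 < i + 1 by omega)]
  · rcases n with _ | m
    · omega
    · -- j ≤ m
      have hjm : j ≤ m := by omega
      simp only [Nat.succ_sub_one]
      -- (m+1).choose j' with symmetry
      have h1 : m.choose j = m.choose (m - j) := (Nat.choose_symm hjm).symm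
      have h2 := Nat.add_one_mul_choose_eq m (m - j)
      have h3 : (m+1).choose (m - j + 1) = (m+1).choose j := by
        rw [← Nat.choose_symm (by omega : m - j + 1 ≤ m + 1)]
        congr 1
        omega
      rw [h1]
      have h4 : (m + 1) - j = m - j + 1 := by omega
      rw [h4, ← h3]
      omega

lemma hasDerivAt_term (n j : ℕ) (hj1 : 1 ≤ j) (hjn : j ≤ n) (t : ℝ) :
    HasDerivAt (fun t : ℝ => (n.choose j : ℝ) * t ^ j * (1 - t) ^ (n - j))
      (aa n j t - aa n (j+1) t) t := by
  have h1 : HasDerivAt (fun t : ℝ => t ^ j) ((j:ℝ) * t ^ (j-1)) t := by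
    simpa using hasDerivAt_pow j t
  have h2 : HasDerivAt (fun t : ℝ => (1 - t) ^ (n - j))
      (((n-j : ℕ):ℝ) * (1-t) ^ (n - j - 1) * (-1)) t := by
    exact ((hasDerivAt_id t).const_sub 1).pow (n - j)
  have := (h1.mul h2).const_mul ((n.choose j : ℝ))
  convert this using 1
  · rfl
  · rfl
  · ext s; rw [Pi.mul_apply]; ring
  · have e1 : ((n.choose j : ℕ):ℝ) * (j:ℝ) = (n:ℝ) * ((n-1).choose (j-1) : ℕ) := by
      rw [← Nat.cast_mul, ← Nat.cast_mul, choose_id1 n j hj1]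
    have e2 : ((n.choose j : ℕ):ℝ) * ((n-j:ℕ):ℝ) = (n:ℝ) * ((n-1).choose j : ℕ) := by
      rw [← Nat.cast_mul, ← Nat.cast_mul, choose_id2 n j hjn]
    simp only [aa]
    have e3 : (j+1) - 1 = j := by omega
    have e4 : n - (j+1) = n - j - 1 := by omega
    rw [e3, e4]
    linear_combination (-(t^(j-1) * (1-t)^(n-j))) * e1 + (t^j * (1-t)^(n-j-1)) * e2

lemma hasDerivAt_psi (n k : ℕ) (hk1 : 1 ≤ k) (hkn : k ≤ n) (t : ℝ) :
    HasDerivAt (fun t : ℝ => ∑ j ∈ Finset.Icc k n,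
      (n.choose j : ℝ) * t ^ j * (1 - t) ^ (n - j)) (aa n k t) t := by
  have h : HasDerivAt (fun t : ℝ => ∑ j ∈ Finset.Icc k n,
      (n.choose j : ℝ) * t ^ j * (1 - t) ^ (n - j))
      (∑ j ∈ Finset.Icc k n, (aa n j t - aa n (j+1) t)) t := by
    apply HasDerivAt.fun_sum
    intro j hj
    simp only [Finset.mem_Icc] at hj
    exact hasDerivAt_term n j (le_trans hk1 hj.1) hj.2 t
  convert h using 1
  rw [← Finset.Ico_add_one_right_eq_Icc, Finset.sum_Ico_eq_sum_range]
  have hN : n + 1 - k = (n - k) + 1 := by omega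
  rw [hN]
  have tel := Finset.sum_range_sub' (fun i => aa n (k + i) t) (n - k + 1)
  simp only [← add_assoc] at tel
  rw [tel]
  have hz : aa n (k + (n - k) + 1) t = 0 := by
    have he : k + (n - k) + 1 = n + 1 := by omega
    rw [he]
    simp [aa, Nat.choose_eq_zero_of_lt (by omega : n - 1 < n)]
  rw [hz]
  simp

lemma psi_strictMonoOn (n k : ℕ) (hk1 : 1 ≤ k) (hkn : k ≤ n) :
    StrictMonoOn (fun t : ℝ => ∑ j ∈ Finset.Icc k n,
      (n.choose j : ℝ) * t ^ j * (1 - t) ^ (n - j)) (Icc 0 1) := by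
  apply strictMonoOn_of_deriv_pos (convex_Icc 0 1)
  · apply Continuous.continuousOn
    apply continuous_finset_sum
    intro j _
    fun_prop
  · intro t ht
    rw [interior_Icc] at ht
    rw [(hasDerivAt_psi n k hk1 hkn t).deriv]
    unfold aa
    have h1 : (0:ℝ) < n := by
      have : 0 < n := by omega
      exact_mod_cast this
    have h2 : (0:ℝ) < ((n-1).choose (k-1) : ℕ) := by
      have : 0 < (n-1).choose (k-1) := Nat.choose_pos (by omega)
      exact_mod_cast this
    have h3 : (0:ℝ) < t ^ (k-1) := pow_pos ht.1 _
    have h4 : (0:ℝ) < (1 - t) ^ (n-k) := pow_pos (by linarith [ht.2]) _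
    positivity

lemma psi_zero (n k : ℕ) (hk1 : 1 ≤ k) :
    ∑ j ∈ Finset.Icc k n, (n.choose j : ℝ) * (0:ℝ) ^ j * (1 - 0) ^ (n - j) = 0 := by
  apply Finset.sum_eq_zero
  intro j hj
  simp only [Finset.mem_Icc] at hj
  rw [zero_pow (by omega : j ≠ 0)]
  ring

lemma psi_one (n k : ℕ) (hkn : k ≤ n) :
    ∑ j ∈ Finset.Icc k n, (n.choose j : ℝ) * (1:ℝ) ^ j * (1 - 1) ^ (n - j) = 1 := by
  rw [Finset.sum_eq_single n]
  · simp
  · intro j hj hne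
    simp only [Finset.mem_Icc] at hj
    rw [sub_self, zero_pow (by omega : n - j ≠ 0)]
    ring
  · intro h
    exact absurd (Finset.mem_Icc.mpr ⟨hkn, le_refl n⟩) h

lemma mem_Ioo_of_cdf (F : ℝ → ℝ) (hFm : StrictMono F)
    (hF0 : Tendsto F atBot (nhds 0)) (hF1 : Tendsto F atTop (nhds 1)) (x : ℝ) :
    F x ∈ Ioo (0:ℝ) 1 := by
  constructor
  · have h1 : (0:ℝ) ≤ F (x - 1) := hFm.monotone.le_of_tendsto hF0 (x - 1)
    have h2 : F (x - 1) < F x := hFm (by linarith)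
    linarith
  · have h1 : F (x + 1) ≤ 1 := hFm.monotone.ge_of_tendsto hF1 (x + 1)
    have h2 : F x < F (x + 1) := hFm (by linarith)
    linarith

/-- With `F_{X_{(1+⌊(n-1)γₙ⌋):n}} = φ_{n,γₙ} ∘ F_X` and similarly for `Y`,
`A_{0,n} = {v ∈ (0,1) : F⁻¹_{X_{(·):n}}(v) > F⁻¹_{Y_{(·):n}}(v)}` equals
`φ_{n,γₙ}(A₀)` where `A₀ = {u ∈ (0,1) : F_X⁻¹(u) > F_Y⁻¹(u)}`. -/
theorem stmt8 (FX FY : ℝ → ℝ)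
    (hFXc : Continuous FX) (hFYc : Continuous FY)
    (hFXm : StrictMono FX) (hFYm : StrictMono FY)
    (hFX0 : Tendsto FX atBot (nhds 0)) (hFX1 : Tendsto FX atTop (nhds 1))
    (hFY0 : Tendsto FY atBot (nhds 0)) (hFY1 : Tendsto FY atTop (nhds 1))
    (n : ℕ) (hn : 1 ≤ n) (γn : ℝ) (hγn : γn ∈ Set.Icc (0:ℝ) 1) :
    {v ∈ Set.Ioo (0:ℝ) 1 |
        linv (fun x => phi n γn (FY x)) v < linv (fun x => phi n γn (FX x)) v}
      = phi n γn '' {u ∈ Set.Ioo (0:ℝ) 1 | linv FY u < linv FX u} := by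
  set k := 1 + (⌊((n : ℝ) - 1) * γn⌋).toNat with hk
  have hk1 : 1 ≤ k := by omega
  have hkn : k ≤ n := by
    have hfl : ⌊((n : ℝ) - 1) * γn⌋ ≤ (n : ℤ) - 1 := by
      have h0 : (0:ℝ) ≤ (n : ℝ) - 1 := by
        have : (1:ℝ) ≤ n := by exact_mod_cast hn
        linarith
      have hle : ((n : ℝ) - 1) * γn ≤ (n : ℝ) - 1 := mul_le_of_le_one_right h0 hγn.2
      have h1 := Int.floor_le_floor hle
      have h2 : ⌊((n:ℝ) - 1)⌋ = (n : ℤ) - 1 := by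
        rw [show ((n:ℝ) - 1) = (((n:ℤ) - 1 : ℤ) : ℝ) by push_cast; ring, Int.floor_intCast]
      omega
    have : (⌊((n : ℝ) - 1) * γn⌋).toNat ≤ n - 1 := by omega
    omega
  have hφeq : phi n γn = fun t : ℝ => ∑ j ∈ Finset.Icc k n,
      (n.choose j : ℝ) * t ^ j * (1 - t) ^ (n - j) := rfl
  have hmono : StrictMonoOn (phi n γn) (Icc 0 1) := by
    rw [hφeq]; exact psi_strictMonoOn n k hk1 hkn
  have hcont : Continuous (phi n γn) := by
    rw [hφeq]
    apply continuous_finset_sum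
    intro j _
    fun_prop
  have hφ0 : phi n γn 0 = 0 := by rw [hφeq]; exact psi_zero n k hk1
  have hφ1 : phi n γn 1 = 1 := by rw [hφeq]; exact psi_one n k hkn
  have hFX' : ∀ x, FX x ∈ Ioo (0:ℝ) 1 := mem_Ioo_of_cdf FX hFXm hFX0 hFX1
  have hFY' : ∀ x, FY x ∈ Ioo (0:ℝ) 1 := mem_Ioo_of_cdf FY hFYm hFY0 hFY1
  have key : ∀ u ∈ Ioo (0:ℝ) 1, ∀ F : ℝ → ℝ, (∀ x, F x ∈ Ioo (0:ℝ) 1) →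
      linv (fun x => phi n γn (F x)) (phi n γn u) = linv F u := by
    intro u hu F hF
    unfold linv
    congr 1
    ext x
    simp only [mem_setOf_eq]
    exact hmono.le_iff_le (Ioo_subset_Icc_self hu) (Ioo_subset_Icc_self (hF x))
  have hmem : ∀ u ∈ Ioo (0:ℝ) 1, phi n γn u ∈ Ioo (0:ℝ) 1 := by
    intro u hu
    constructor
    · rw [← hφ0]
      exact hmono (left_mem_Icc.mpr zero_le_one) (Ioo_subset_Icc_self hu) hu.1
    · rw [← hφ1]
      exact hmono (Ioo_subset_Icc_self hu) (right_mem_Icc.mpr zero_le_one) hu.2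
  ext v
  simp only [mem_sep_iff, mem_image]
  constructor
  · rintro ⟨hv, hlt⟩
    have hsurj : v ∈ phi n γn '' Ioo (0:ℝ) 1 := by
      have h := intermediate_value_Ioo (zero_le_one (α := ℝ)) hcont.continuousOn
      rw [hφ0, hφ1] at h
      exact h hv
    obtain ⟨u, hu, rfl⟩ := hsurj
    refine ⟨u, ⟨hu, ?_⟩, rfl⟩
    rwa [key u hu FY hFY', key u hu FX hFX'] at hlt
  · rintro ⟨u, ⟨hu, hlt⟩, rfl⟩
    refine ⟨hmem u hu, ?_⟩
    rw [key u hu FY hFY', key u hu FX hFX']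
    exact hlt
end

section
/- Let {X_t}, {Y_t}, {Z_t} (t ∈ T, T ⊆ ℝ unbounded above) be stochastic processes whose marginals have finite second moments. Suppose ε(F_{X_t},F_{Y_t}) → 0 and ε(F_{Y_t},F_{Z_t}) → 0 as t → ∞, and that W₂²(F_{X_t},F_{Y_t}) = O(W₂²(F_{X_t},F_{Z_t})) and W₂²(F_{Y_t},F_{Z_t}) = O(W₂²(F_{X_t},F_{Z_t})). Then ε(F_{X_t},F_{Z_t}) → 0 as t → ∞. (Transitivity of departure-based asymptotic stochastic order under a comparability condition on Wasserstein distances.) -/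
open MeasureTheory Set Filter

/-- Squared L₂-Wasserstein distance between two cdfs, via quantile functions. -/
noncomputable def W2sq (F G : ℝ → ℝ) : ℝ :=
  ∫ u in Set.Ioo (0:ℝ) 1, (linv F u - linv G u) ^ 2

/-- Measure of departure from the usual stochastic order, with the convention
`ε = 0` when `W₂ = 0`. -/
noncomputable def eps (F G : ℝ → ℝ) : ℝ :=
  if W2sq F G = 0 then 0
  else (∫ u in {u ∈ Set.Ioo (0:ℝ) 1 | linv G u < linv F u},
          (linv F u - linv G u) ^ 2) / W2sq F G

lemma linv_measurable (F : ℝ → ℝ) : Measurable (linv F) := by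
  set S : ℝ → Set ℝ := fun u => {x : ℝ | u ≤ F x} with hS
  have hanti : ∀ {u v : ℝ}, u ≤ v → S v ⊆ S u := fun h x hx => le_trans h hx
  set U : Set ℝ := {u | (S u).Nonempty ∧ BddBelow (S u)} with hU
  have hUoc : U.OrdConnected := by
    constructor
    intro x hx y hy z hz
    exact ⟨hy.1.mono (hanti hz.2), (hx.2).mono (hanti hz.1)⟩
  have hmono : MonotoneOn (linv F) U := by
    intro u hu v hv huv
    exact csInf_le_csInf hu.2 hv.1 (hanti huv)
  have hzero : ∀ u ∉ U, linv F u = 0 := by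
    intro u hu
    rw [hU, mem_setOf_eq, not_and_or] at hu
    rcases hu with hu | hu
    · rw [Set.not_nonempty_iff_eq_empty] at hu
      simp only [linv]
      rw [show {x : ℝ | u ≤ F x} = S u from rfl, hu, Real.sInf_empty]
    · simp only [linv]
      rw [show {x : ℝ | u ≤ F x} = S u from rfl, csInf_of_not_bddBelow hu, Real.sInf_empty]
  apply measurable_of_Iio
  intro a
  have hV : MeasurableSet {u ∈ U | linv F u < a} := by
    have : ({u ∈ U | linv F u < a} : Set ℝ).OrdConnected := by
      constructor
      intro x hx y hy z hz
      have hzU : z ∈ U := hUoc.out' hx.1 hy.1 hz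
      exact ⟨hzU, lt_of_le_of_lt (hmono hzU hy.1 hz.2) hy.2⟩
    exact this.measurableSet
  rcases le_or_gt a 0 with ha | ha
  · have : linv F ⁻¹' Iio a = {u ∈ U | linv F u < a} := by
      ext u
      simp only [mem_preimage, mem_Iio, mem_setOf_eq]
      constructor
      · intro h
        by_cases hu : u ∈ U
        · exact ⟨hu, h⟩
        · exact absurd h (by rw [hzero u hu]; exact not_lt.2 ha)
      · exact fun h => h.2
    rw [this]; exact hV
  · have : linv F ⁻¹' Iio a = {u ∈ U | linv F u < a} ∪ Uᶜ := by
      ext u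
      simp only [mem_preimage, mem_Iio, mem_union, mem_setOf_eq, mem_compl_iff]
      constructor
      · intro h
        by_cases hu : u ∈ U
        · exact Or.inl ⟨hu, h⟩
        · exact Or.inr hu
      · rintro (⟨_, h⟩ | h)
        · exact h
        · rw [hzero u h]; exact ha
    rw [this]
    exact hV.union hUoc.measurableSet.compl


/-- the numerator of eps -/
noncomputable def Npos (F G : ℝ → ℝ) : ℝ :=
  ∫ u in {u ∈ Set.Ioo (0:ℝ) 1 | linv G u < linv F u}, (linv F u - linv G u) ^ 2

lemma Aset_meas (F G : ℝ → ℝ) :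
    MeasurableSet {u ∈ Set.Ioo (0:ℝ) 1 | linv G u < linv F u} :=
  measurableSet_Ioo.inter (measurableSet_lt (linv_measurable G) (linv_measurable F))

lemma W2sq_nonneg (F G : ℝ → ℝ) : 0 ≤ W2sq F G :=
  setIntegral_nonneg measurableSet_Ioo (fun _ _ => sq_nonneg _)

lemma Npos_nonneg (F G : ℝ → ℝ) : 0 ≤ Npos F G :=
  setIntegral_nonneg (Aset_meas F G) (fun _ _ => sq_nonneg _)

lemma eps_nonneg (F G : ℝ → ℝ) : 0 ≤ eps F G := by
  unfold eps
  split_ifs with h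
  · exact le_refl 0
  · exact div_nonneg (Npos_nonneg F G) (W2sq_nonneg F G)

lemma diff_sq_integrable {F G : ℝ → ℝ}
    (hF : IntegrableOn (fun u => (linv F u) ^ 2) (Set.Ioo (0:ℝ) 1))
    (hG : IntegrableOn (fun u => (linv G u) ^ 2) (Set.Ioo (0:ℝ) 1)) :
    IntegrableOn (fun u => (linv F u - linv G u) ^ 2) (Set.Ioo (0:ℝ) 1) := by
  have hb : IntegrableOn (fun u => 2 * (linv F u) ^ 2 + 2 * (linv G u) ^ 2)
      (Set.Ioo (0:ℝ) 1) := (hF.const_mul 2).add (hG.const_mul 2)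
  refine hb.mono' ?_ ?_
  · exact (((linv_measurable F).sub (linv_measurable G)).pow_const 2).aestronglyMeasurable
  · filter_upwards with u
    rw [Real.norm_eq_abs, abs_of_nonneg (sq_nonneg _)]
    nlinarith [sq_nonneg (linv F u + linv G u)]

lemma pospart_sq_integrable {F G : ℝ → ℝ}
    (hF : IntegrableOn (fun u => (linv F u) ^ 2) (Set.Ioo (0:ℝ) 1))
    (hG : IntegrableOn (fun u => (linv G u) ^ 2) (Set.Ioo (0:ℝ) 1)) :
    IntegrableOn (fun u => (max (linv F u - linv G u) 0) ^ 2) (Set.Ioo (0:ℝ) 1) := by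
  refine (diff_sq_integrable hF hG).mono' ?_ ?_
  · exact ((((linv_measurable F).sub (linv_measurable G)).max measurable_const).pow_const
      2).aestronglyMeasurable
  · filter_upwards with u
    rw [Real.norm_eq_abs, abs_of_nonneg (sq_nonneg _)]
    rcases le_or_gt (linv F u - linv G u) 0 with h | h
    · rw [max_eq_right h]; norm_num; positivity
    · rw [max_eq_left h.le]

lemma Npos_le_W2sq {F G : ℝ → ℝ}
    (hF : IntegrableOn (fun u => (linv F u) ^ 2) (Set.Ioo (0:ℝ) 1))
    (hG : IntegrableOn (fun u => (linv G u) ^ 2) (Set.Ioo (0:ℝ) 1)) :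
    Npos F G ≤ W2sq F G := by
  apply setIntegral_mono_set (diff_sq_integrable hF hG)
  · filter_upwards with u using sq_nonneg _
  · exact HasSubset.Subset.eventuallyLE (fun u hu => hu.1)

lemma Npos_eq_eps_mul {F G : ℝ → ℝ}
    (hF : IntegrableOn (fun u => (linv F u) ^ 2) (Set.Ioo (0:ℝ) 1))
    (hG : IntegrableOn (fun u => (linv G u) ^ 2) (Set.Ioo (0:ℝ) 1)) :
    Npos F G ≤ eps F G * W2sq F G := by
  unfold eps
  split_ifs with h
  · have h1 := Npos_le_W2sq hF hG
    rw [h] at h1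
    have h2 := Npos_nonneg F G
    linarith
  · show Npos F G ≤ Npos F G / W2sq F G * W2sq F G
    rw [div_mul_cancel₀ _ h]

/-- ∫ over Ioo of pospart² equals Npos -/
lemma integral_pospart_sq {F G : ℝ → ℝ}
    (hF : IntegrableOn (fun u => (linv F u) ^ 2) (Set.Ioo (0:ℝ) 1))
    (hG : IntegrableOn (fun u => (linv G u) ^ 2) (Set.Ioo (0:ℝ) 1)) :
    (∫ u in Set.Ioo (0:ℝ) 1, (max (linv F u - linv G u) 0) ^ 2) = Npos F G := by
  set A := {u ∈ Set.Ioo (0:ℝ) 1 | linv G u < linv F u} with hA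
  have hAsub : A ⊆ Set.Ioo (0:ℝ) 1 := fun u hu => hu.1
  have hAm := Aset_meas F G
  have hint := pospart_sq_integrable hF hG
  have hsplit : Set.Ioo (0:ℝ) 1 = A ∪ (Set.Ioo (0:ℝ) 1 \ A) := (Set.union_diff_cancel hAsub).symm
  rw [hsplit, setIntegral_union disjoint_sdiff_right (measurableSet_Ioo.diff hAm)
    (hint.mono_set hAsub) (hint.mono_set (diff_subset))]
  have h2 : (∫ u in Set.Ioo (0:ℝ) 1 \ A, (max (linv F u - linv G u) 0) ^ 2) = 0 := by
    rw [setIntegral_congr_fun (measurableSet_Ioo.diff hAm)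
      (g := fun _ => (0:ℝ)) ?_, integral_zero]
    intro u hu
    have : ¬ linv G u < linv F u := fun h => hu.2 ⟨hu.1, h⟩
    simp only [max_eq_right (sub_nonpos.2 (not_lt.1 this))]
    norm_num
  have h1 : (∫ u in A, (max (linv F u - linv G u) 0) ^ 2)
      = ∫ u in A, (linv F u - linv G u) ^ 2 := by
    apply setIntegral_congr_fun hAm
    intro u hu
    dsimp only
    rw [max_eq_left (sub_nonneg.2 hu.2.le)]
  rw [h1, h2, add_zero]
  rfl

/-- key inequality -/
lemma Npos_triangle {F G H : ℝ → ℝ}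
    (hF : IntegrableOn (fun u => (linv F u) ^ 2) (Set.Ioo (0:ℝ) 1))
    (hG : IntegrableOn (fun u => (linv G u) ^ 2) (Set.Ioo (0:ℝ) 1))
    (hH : IntegrableOn (fun u => (linv H u) ^ 2) (Set.Ioo (0:ℝ) 1)) :
    Npos F H ≤ 2 * Npos F G + 2 * Npos G H := by
  set A := {u ∈ Set.Ioo (0:ℝ) 1 | linv H u < linv F u} with hA
  have hAsub : A ⊆ Set.Ioo (0:ℝ) 1 := fun u hu => hu.1
  have hAm := Aset_meas F H
  have hpFG := pospart_sq_integrable hF hG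
  have hpGH := pospart_sq_integrable hG hH
  have hbig : IntegrableOn
      (fun u => 2 * (max (linv F u - linv G u) 0) ^ 2 + 2 * (max (linv G u - linv H u) 0) ^ 2)
      (Set.Ioo (0:ℝ) 1) := (hpFG.const_mul 2).add (hpGH.const_mul 2)
  have step1 : Npos F H ≤ ∫ u in A,
      (2 * (max (linv F u - linv G u) 0) ^ 2 + 2 * (max (linv G u - linv H u) 0) ^ 2) := by
    apply setIntegral_mono_on ((diff_sq_integrable hF hH).mono_set hAsub)
      (hbig.mono_set hAsub) hAm
    intro u hu
    have hlt : linv H u < linv F u := hu.2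
    have h1 : linv F u - linv G u ≤ max (linv F u - linv G u) 0 := le_max_left _ _
    have h2 : linv G u - linv H u ≤ max (linv G u - linv H u) 0 := le_max_left _ _
    have h3 : (0:ℝ) ≤ max (linv F u - linv G u) 0 := le_max_right _ _
    have h4 : (0:ℝ) ≤ max (linv G u - linv H u) 0 := le_max_right _ _
    have ha : 0 < linv F u - linv H u := sub_pos.2 hlt
    have h5 : linv F u - linv H u ≤ max (linv F u - linv G u) 0 + max (linv G u - linv H u) 0 := by
      linarith
    have h6 : (linv F u - linv H u) ^ 2
        ≤ (max (linv F u - linv G u) 0 + max (linv G u - linv H u) 0) ^ 2 := by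
      nlinarith
    nlinarith [sq_nonneg (max (linv F u - linv G u) 0 - max (linv G u - linv H u) 0)]
  have step2 : (∫ u in A,
      (2 * (max (linv F u - linv G u) 0) ^ 2 + 2 * (max (linv G u - linv H u) 0) ^ 2))
      ≤ ∫ u in Set.Ioo (0:ℝ) 1,
      (2 * (max (linv F u - linv G u) 0) ^ 2 + 2 * (max (linv G u - linv H u) 0) ^ 2) := by
    apply setIntegral_mono_set hbig
    · filter_upwards with u; positivity
    · exact HasSubset.Subset.eventuallyLE hAsub
  have step3 : (∫ u in Set.Ioo (0:ℝ) 1,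
      (2 * (max (linv F u - linv G u) 0) ^ 2 + 2 * (max (linv G u - linv H u) 0) ^ 2))
      = 2 * Npos F G + 2 * Npos G H := by
    rw [integral_add (hpFG.const_mul 2) (hpGH.const_mul 2), integral_const_mul,
      integral_const_mul, integral_pospart_sq hF hG, integral_pospart_sq hG hH]
  linarith

/-- Transitivity of the departure-based asymptotic stochastic order under the
comparability conditions `W₂²(F_{X_t},F_{Y_t}) = O(W₂²(F_{X_t},F_{Z_t}))` and
`W₂²(F_{Y_t},F_{Z_t}) = O(W₂²(F_{X_t},F_{Z_t}))`, for processes indexed by an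
unbounded-above `T ⊆ ℝ` whose marginals have finite second moments. -/
theorem stmt10 (T : Set ℝ) (hT : ¬ BddAbove T)
    (FX FY FZ : ℝ → ℝ → ℝ)
    (hmom : ∀ t ∈ T,
      IntegrableOn (fun u => (linv (FX t) u) ^ 2) (Set.Ioo (0:ℝ) 1) ∧
      IntegrableOn (fun u => (linv (FY t) u) ^ 2) (Set.Ioo (0:ℝ) 1) ∧
      IntegrableOn (fun u => (linv (FZ t) u) ^ 2) (Set.Ioo (0:ℝ) 1))
    (h1 : Tendsto (fun t => eps (FX t) (FY t)) (atTop ⊓ Filter.principal T) (nhds 0))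
    (h2 : Tendsto (fun t => eps (FY t) (FZ t)) (atTop ⊓ Filter.principal T) (nhds 0))
    (hO1 : ∃ C > (0:ℝ), ∀ᶠ t in atTop ⊓ Filter.principal T,
      W2sq (FX t) (FY t) ≤ C * W2sq (FX t) (FZ t))
    (hO2 : ∃ C > (0:ℝ), ∀ᶠ t in atTop ⊓ Filter.principal T,
      W2sq (FY t) (FZ t) ≤ C * W2sq (FX t) (FZ t)) :
    Tendsto (fun t => eps (FX t) (FZ t)) (atTop ⊓ Filter.principal T) (nhds 0) := by
  obtain ⟨C1, hC1, hE1⟩ := hO1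
  obtain ⟨C2, hC2, hE2⟩ := hO2
  have hg : Tendsto (fun t => 2 * C1 * eps (FX t) (FY t) + 2 * C2 * eps (FY t) (FZ t))
      (atTop ⊓ Filter.principal T) (nhds 0) := by
    have := (h1.const_mul (2 * C1)).add (h2.const_mul (2 * C2))
    simpa using this
  apply squeeze_zero' (Eventually.of_forall fun t => eps_nonneg _ _) ?_ hg
  have hmemT : ∀ᶠ t in atTop ⊓ Filter.principal T, t ∈ T :=
    Filter.Eventually.filter_mono inf_le_right (eventually_principal.2 fun _ ht => ht)
  filter_upwards [hE1, hE2, hmemT] with t ht1 ht2 htT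
  obtain ⟨hX2, hY2, hZ2⟩ := hmom t htT
  have e1 := eps_nonneg (FX t) (FY t)
  have e2 := eps_nonneg (FY t) (FZ t)
  by_cases hW : W2sq (FX t) (FZ t) = 0
  · have h0 : eps (FX t) (FZ t) = 0 := by unfold eps; rw [if_pos hW]
    rw [h0]
    have := mul_nonneg (by linarith : (0:ℝ) ≤ 2 * C1) e1
    have := mul_nonneg (by linarith : (0:ℝ) ≤ 2 * C2) e2
    linarith
  · have hWpos : 0 < W2sq (FX t) (FZ t) := lt_of_le_of_ne (W2sq_nonneg _ _) (Ne.symm hW)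
    have heq : eps (FX t) (FZ t) = Npos (FX t) (FZ t) / W2sq (FX t) (FZ t) := by
      unfold eps; rw [if_neg hW]; rfl
    rw [heq, div_le_iff₀ hWpos]
    have k1 := Npos_triangle hX2 hY2 hZ2
    have k2 := Npos_eq_eps_mul hX2 hY2
    have k3 := Npos_eq_eps_mul hY2 hZ2
    have m1 : eps (FX t) (FY t) * W2sq (FX t) (FY t)
        ≤ eps (FX t) (FY t) * (C1 * W2sq (FX t) (FZ t)) := mul_le_mul_of_nonneg_left ht1 e1
    have m2 : eps (FY t) (FZ t) * W2sq (FY t) (FZ t)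
        ≤ eps (FY t) (FZ t) * (C2 * W2sq (FX t) (FZ t)) := mul_le_mul_of_nonneg_left ht2 e2
    nlinarith
end

section
/- Key inequality for transitivity: let F, G, H be cdfs with quantile functions F^{-1}, G^{-1}, H^{-1}, and set A = {u ∈ (0,1) : F^{-1}(u) > G^{-1}(u)}, B = {u : G^{-1}(u) > H^{-1}(u)}, C = {u : F^{-1}(u) > H^{-1}(u)}. Then ∫_C (F^{-1}(u) − H^{-1}(u))² du ≤ 3[∫_B (G^{-1}(u) − H^{-1}(u))² du + ∫_A (F^{-1}(u) − G^{-1}(u))² du]. -/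
open MeasureTheory Set Filter

/-- Key inequality for transitivity: with `A = {u ∈ (0,1) : F⁻¹(u) > G⁻¹(u)}`,
`B = {u : G⁻¹(u) > H⁻¹(u)}`, `C = {u : F⁻¹(u) > H⁻¹(u)}`,
`∫_C (F⁻¹ − H⁻¹)² ≤ 3[∫_B (G⁻¹ − H⁻¹)² + ∫_A (F⁻¹ − G⁻¹)²]`. -/
theorem stmt11 (F G H : ℝ → ℝ)
    (hFG : IntegrableOn (fun u => (linv F u - linv G u) ^ 2) (Set.Ioo (0:ℝ) 1))
    (hGH : IntegrableOn (fun u => (linv G u - linv H u) ^ 2) (Set.Ioo (0:ℝ) 1))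
    (hFH : IntegrableOn (fun u => (linv F u - linv H u) ^ 2) (Set.Ioo (0:ℝ) 1)) :
    (∫ u in {u ∈ Set.Ioo (0:ℝ) 1 | linv H u < linv F u}, (linv F u - linv H u) ^ 2)
      ≤ 3 * ((∫ u in {u ∈ Set.Ioo (0:ℝ) 1 | linv H u < linv G u},
                (linv G u - linv H u) ^ 2)
           + (∫ u in {u ∈ Set.Ioo (0:ℝ) 1 | linv G u < linv F u},
                (linv F u - linv G u) ^ 2)) := by
  set f := linv F
  set g := linv G
  set h := linv H
  have hf : Measurable f := linv_measurable F
  have hg : Measurable g := linv_measurable G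
  have hh : Measurable h := linv_measurable H
  set sC : Set ℝ := {u | h u < f u} with hsC
  set sB : Set ℝ := {u | h u < g u} with hsB
  set sA : Set ℝ := {u | g u < f u} with hsA
  have hmC : MeasurableSet sC := measurableSet_lt hh hf
  have hmB : MeasurableSet sB := measurableSet_lt hh hg
  have hmA : MeasurableSet sA := measurableSet_lt hg hf
  set φ : ℝ → ℝ := fun u => (f u - h u) ^ 2 with hφ
  set ψ : ℝ → ℝ := fun u => (g u - h u) ^ 2 with hψ
  set χ : ℝ → ℝ := fun u => (f u - g u) ^ 2 with hχ
  have hsetC : {u ∈ Set.Ioo (0:ℝ) 1 | h u < f u} = Set.Ioo (0:ℝ) 1 ∩ sC := rfl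
  have hsetB : {u ∈ Set.Ioo (0:ℝ) 1 | h u < g u} = Set.Ioo (0:ℝ) 1 ∩ sB := rfl
  have hsetA : {u ∈ Set.Ioo (0:ℝ) 1 | g u < f u} = Set.Ioo (0:ℝ) 1 ∩ sA := rfl
  rw [hsetC, hsetB, hsetA]
  rw [← setIntegral_indicator hmC, ← setIntegral_indicator hmB, ← setIntegral_indicator hmA]
  have key : ∀ u, sC.indicator φ u ≤ 2 * sB.indicator ψ u + 2 * sA.indicator χ u := by
    intro u
    simp only [Set.indicator_apply, hsC, hsB, hsA, Set.mem_setOf_eq, hφ, hψ, hχ]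
    split_ifs with h1 h2 h3 h2 h3 <;> nlinarith [sq_nonneg (f u - h u), sq_nonneg (g u - h u),
      sq_nonneg (f u - g u), sq_nonneg (f u + h u - 2 * g u)]
  have hiC : IntegrableOn (sC.indicator φ) (Set.Ioo (0:ℝ) 1) :=
    hFH.indicator hmC
  have hiB : IntegrableOn (sB.indicator ψ) (Set.Ioo (0:ℝ) 1) :=
    hGH.indicator hmB
  have hiA : IntegrableOn (sA.indicator χ) (Set.Ioo (0:ℝ) 1) :=
    hFG.indicator hmA
  have step : (∫ u in Set.Ioo (0:ℝ) 1, sC.indicator φ u)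
      ≤ ∫ u in Set.Ioo (0:ℝ) 1, (2 * sB.indicator ψ u + 2 * sA.indicator χ u) := by
    apply integral_mono hiC ((hiB.const_mul 2).add (hiA.const_mul 2))
    intro u
    exact key u
  have hBnn : 0 ≤ ∫ u in Set.Ioo (0:ℝ) 1, sB.indicator ψ u := by
    apply integral_nonneg
    intro u
    exact Set.indicator_nonneg (fun x _ => sq_nonneg _) u
  have hAnn : 0 ≤ ∫ u in Set.Ioo (0:ℝ) 1, sA.indicator χ u := by
    apply integral_nonneg
    intro u
    exact Set.indicator_nonneg (fun x _ => sq_nonneg _) u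
  calc (∫ u in Set.Ioo (0:ℝ) 1, sC.indicator φ u)
      ≤ ∫ u in Set.Ioo (0:ℝ) 1, (2 * sB.indicator ψ u + 2 * sA.indicator χ u) := step
    _ = 2 * (∫ u in Set.Ioo (0:ℝ) 1, sB.indicator ψ u)
        + 2 * (∫ u in Set.Ioo (0:ℝ) 1, sA.indicator χ u) := by
        rw [integral_add (hiB.const_mul 2) (hiA.const_mul 2), integral_const_mul,
          integral_const_mul]
    _ ≤ 3 * ((∫ u in Set.Ioo (0:ℝ) 1, sB.indicator ψ u)
        + (∫ u in Set.Ioo (0:ℝ) 1, sA.indicator χ u)) := by linarith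
end

section
/- Let X_1,…,X_n be iid from cdf F_X and Y_1,…,Y_n iid from cdf F_Y, where F_X, F_Y are continuous, strictly increasing, with finite second moments. Suppose there exists c ∈ ℝ with F_X(x) > F_Y(x) for all x > c. Then for arbitrarily small ε > 0 there is a nonnegative constant K_ε independent of n such that ε(F_{X_{n:n}}, F_{Y_{n:n}}) ≤ K_ε · (F_Y(c)/(1−ε))^{n−1}, where X_{n:n}, Y_{n:n} are the sample maxima with cdfs F_X^n, F_Y^n. Consequently ε(F_{X_{n:n}}, F_{Y_{n:n}}) → 0 as n → ∞. -/
open MeasureTheory Set Filter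

section basic
variable {F : ℝ → ℝ}

lemma F_pos (hm : StrictMono F) (h0 : Tendsto F atBot (nhds 0)) (x : ℝ) : 0 < F x := by
  have h1 : F (x - 1) < F x := hm (by linarith)
  have h2 : (0:ℝ) ≤ F (x - 1) :=
    le_of_tendsto h0 (eventually_atBot.2 ⟨x - 1, fun y hy => hm.le_iff_le.2 hy⟩)
  linarith

lemma F_lt_one (hm : StrictMono F) (h1 : Tendsto F atTop (nhds 1)) (x : ℝ) : F x < 1 := by
  have h2 : F x < F (x + 1) := hm (by linarith)
  have h3 : F (x + 1) ≤ 1 :=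
    ge_of_tendsto h1 (eventually_atTop.2 ⟨x + 1, fun y hy => hm.le_iff_le.2 hy⟩)
  linarith

lemma exists_Fx (hFc : Continuous F) (h0 : Tendsto F atBot (nhds 0)) (h1 : Tendsto F atTop (nhds 1))
    {u : ℝ} (hu : u ∈ Ioo (0:ℝ) 1) : ∃ x, F x = u := by
  obtain ⟨a, ha⟩ := (h0.eventually (eventually_lt_nhds hu.1)).exists
  obtain ⟨b, hb⟩ := (h1.eventually (eventually_gt_nhds hu.2)).exists
  have := intermediate_value_univ a b hFc
  obtain ⟨x, hx⟩ := this ⟨ha.le, hb.le⟩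
  exact ⟨x, hx⟩

lemma linv_eq_of (hm : StrictMono F) {x u : ℝ} (hx : F x = u) : linv F u = x := by
  have : {y : ℝ | u ≤ F y} = Ici x := by
    ext y; simp only [mem_setOf_eq, mem_Ici, ← hx, hm.le_iff_le]
  rw [linv, this, csInf_Ici]

end basic

section more
variable {F : ℝ → ℝ}

lemma F_linv (hFc : Continuous F) (hm : StrictMono F)
    (h0 : Tendsto F atBot (nhds 0)) (h1 : Tendsto F atTop (nhds 1))
    {u : ℝ} (hu : u ∈ Ioo (0:ℝ) 1) : F (linv F u) = u := by
  obtain ⟨x, hx⟩ := exists_Fx hFc h0 h1 hu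
  rw [linv_eq_of hm hx, hx]

lemma linv_mono (hFc : Continuous F) (hm : StrictMono F)
    (h0 : Tendsto F atBot (nhds 0)) (h1 : Tendsto F atTop (nhds 1))
    {u v : ℝ} (hu : u ∈ Ioo (0:ℝ) 1) (hv : v ∈ Ioo (0:ℝ) 1) (huv : u ≤ v) :
    linv F u ≤ linv F v := by
  have h1' := F_linv hFc hm h0 h1 hu
  have h2' := F_linv hFc hm h0 h1 hv
  rw [← hm.le_iff_le, h1', h2']; exact huv

lemma linv_pow (hFc : Continuous F) (hm : StrictMono F)
    (h0 : Tendsto F atBot (nhds 0)) (h1 : Tendsto F atTop (nhds 1))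
    {n : ℕ} (hn : n ≠ 0) {u : ℝ} (hu : u ∈ Ioo (0:ℝ) 1) :
    linv (fun x => F x ^ n) u = linv F (u ^ ((n:ℝ)⁻¹)) := by
  set w : ℝ := u ^ ((n:ℝ)⁻¹) with hw
  have hw0 : 0 < w := Real.rpow_pos_of_pos hu.1 _
  have hw1 : w < 1 := Real.rpow_lt_one hu.1.le hu.2 (by positivity)
  obtain ⟨x, hx⟩ := exists_Fx hFc h0 h1 ⟨hw0, hw1⟩
  have hwn : w ^ n = u := Real.rpow_inv_natCast_pow hu.1.le hn
  have hset : {y : ℝ | u ≤ F y ^ n} = Ici x := by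
    ext y
    have hFy : 0 < F y := F_pos hm h0 y
    simp only [mem_setOf_eq, mem_Ici]
    rw [← hwn, ← hx]
    constructor
    · intro h
      have := (pow_le_pow_iff_left₀ (F_pos hm h0 x).le hFy.le hn).1 h
      exact (hm.le_iff_le).1 this
    · intro h
      exact pow_le_pow_left₀ (F_pos hm h0 x).le (hm.le_iff_le.2 h) n
  rw [linv, hset, csInf_Ici, linv_eq_of hm hx]

lemma linv_continuousOn (hFc : Continuous F) (hm : StrictMono F)
    (h0 : Tendsto F atBot (nhds 0)) (h1 : Tendsto F atTop (nhds 1)) :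
    ContinuousOn (linv F) (Ioo (0:ℝ) 1) := by
  intro u₀ hu₀
  apply ContinuousAt.continuousWithinAt
  rw [Metric.continuousAt_iff]
  intro η hη
  set x₀ : ℝ := linv F u₀ with hx₀
  have hFx₀ : F x₀ = u₀ := F_linv hFc hm h0 h1 hu₀
  set l : ℝ := F (x₀ - η/2)
  set r : ℝ := F (x₀ + η/2)
  have hl : l < u₀ := by rw [← hFx₀]; exact hm (by linarith)
  have hr : u₀ < r := by rw [← hFx₀]; exact hm (by linarith)
  refine ⟨min (u₀ - l) (r - u₀), lt_min (by linarith) (by linarith), fun {u} hd => ?_⟩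
  rw [Real.dist_eq] at hd ⊢
  have habs := abs_lt.1 hd
  have hul : l < u := by
    have := habs.1; have h2 := min_le_left (u₀ - l) (r - u₀); linarith
  have hur : u < r := by
    have := habs.2; have h2 := min_le_right (u₀ - l) (r - u₀); linarith
  have hu : u ∈ Ioo (0:ℝ) 1 :=
    ⟨lt_trans (F_pos hm h0 _) hul, lt_trans hur (F_lt_one hm h1 _)⟩
  have hFu : F (linv F u) = u := F_linv hFc hm h0 h1 hu
  have k1 : x₀ - η/2 < linv F u := by rw [← hm.lt_iff_lt, hFu]; exact hul
  have k2 : linv F u < x₀ + η/2 := by rw [← hm.lt_iff_lt, hFu]; exact hur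
  rw [abs_lt]; constructor <;> linarith

lemma linv_cross (hFXc : Continuous F) {G : ℝ → ℝ} (hGc : Continuous G)
    (hFm : StrictMono F) (hGm : StrictMono G)
    (hF0 : Tendsto F atBot (nhds 0)) (hF1 : Tendsto F atTop (nhds 1))
    (hG0 : Tendsto G atBot (nhds 0)) (hG1 : Tendsto G atTop (nhds 1))
    {c : ℝ} (hc : ∀ x, c < x → G x < F x)
    {v : ℝ} (hv : v ∈ Ioo (0:ℝ) 1) (hvq : G c < v) : linv F v < linv G v := by
  set y : ℝ := linv G v with hy
  have hGy : G y = v := F_linv hGc hGm hG0 hG1 hv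
  have hcy : c < y := by rw [← hGm.lt_iff_lt, hGy]; exact hvq
  have hFy : v < F y := by rw [← hGy]; exact hc y hcy
  have hFl : F (linv F v) = v := F_linv hFXc hFm hF0 hF1 hv
  rw [← hFm.lt_iff_lt, hFl]; exact hFy
end more

lemma W2sq_integrable {F G : ℝ → ℝ} (h : W2sq F G ≠ 0) :
    IntegrableOn (fun u => (linv F u - linv G u) ^ 2) (Set.Ioo (0:ℝ) 1) := by
  by_contra hni
  exact h (integral_undef hni)

lemma eps_le_one (F G : ℝ → ℝ) : eps F G ≤ 1 := by
  unfold eps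
  split_ifs with h
  · norm_num
  · have hint := W2sq_integrable h
    have hpos : 0 < W2sq F G :=
      lt_of_le_of_ne (integral_nonneg fun u => sq_nonneg _) (Ne.symm h)
    rw [div_le_one hpos]
    exact setIntegral_mono_set hint (Eventually.of_forall fun u => sq_nonneg _)
      (HasSubset.Subset.eventuallyLE (sep_subset _ _))

lemma nat_mul_pow_le {r : ℝ} (h0 : 0 ≤ r) (h1 : r < 1) (n : ℕ) :
    (n:ℝ) * r ^ (n-1) * (1 - r) ≤ 1 := by
  have key : (n:ℝ) * r ^ (n-1) ≤ ∑ i ∈ Finset.range n, r ^ i := by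
    calc (n:ℝ) * r ^ (n-1) = ∑ _i ∈ Finset.range n, r ^ (n-1) := by
          rw [Finset.sum_const, Finset.card_range, nsmul_eq_mul]
      _ ≤ ∑ i ∈ Finset.range n, r ^ i :=
          Finset.sum_le_sum fun i hi => pow_le_pow_of_le_one h0 h1.le (by
            have := Finset.mem_range.1 hi; omega)
  have hg : (∑ i ∈ Finset.range n, r ^ i) * (1 - r) = 1 - r ^ n := by
    linear_combination (-1 : ℝ) * geom_sum_mul r n
  have hrn : (0:ℝ) ≤ r ^ n := pow_nonneg h0 n
  calc (n:ℝ) * r ^ (n-1) * (1 - r) ≤ (∑ i ∈ Finset.range n, r ^ i) * (1 - r) :=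
        mul_le_mul_of_nonneg_right key (by linarith)
    _ = 1 - r ^ n := hg
    _ ≤ 1 := by linarith


set_option maxHeartbeats 2000000 in
/-- Largest order statistics: if `F_X(x) > F_Y(x)` for all `x > c`, then for every
small `ε > 0` there is `K_ε ≥ 0` independent of `n` with
`ε(F_{X_{n:n}},F_{Y_{n:n}}) ≤ K_ε (F_Y(c)/(1-ε))^{n-1}`, where the sample maxima have
cdfs `F_X^n`, `F_Y^n`; consequently `ε(F_{X_{n:n}},F_{Y_{n:n}}) → 0`. -/
theorem stmt14 (FX FY : ℝ → ℝ)
    (hFXc : Continuous FX) (hFYc : Continuous FY)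
    (hFXm : StrictMono FX) (hFYm : StrictMono FY)
    (hFX0 : Tendsto FX atBot (nhds 0)) (hFX1 : Tendsto FX atTop (nhds 1))
    (hFY0 : Tendsto FY atBot (nhds 0)) (hFY1 : Tendsto FY atTop (nhds 1))
    (hmomX : IntegrableOn (fun u => (linv FX u) ^ 2) (Set.Ioo (0:ℝ) 1))
    (hmomY : IntegrableOn (fun u => (linv FY u) ^ 2) (Set.Ioo (0:ℝ) 1))
    (c : ℝ) (hc : ∀ x, c < x → FY x < FX x) :
    (∀ ε ∈ Set.Ioo (0:ℝ) 1, ∃ K ≥ (0:ℝ), ∀ n : ℕ, 1 ≤ n →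
      eps (fun x => (FX x) ^ n) (fun x => (FY x) ^ n) ≤ K * (FY c / (1 - ε)) ^ (n - 1)) ∧
    Tendsto (fun n : ℕ => eps (fun x => (FX x) ^ n) (fun x => (FY x) ^ n))
      atTop (nhds 0) := by
  have hq0 : 0 < FY c := F_pos hFYm hFY0 c
  have hq1 : FY c < 1 := F_lt_one hFYm hFY1 c
  set q : ℝ := FY c with hqdef
  set Δ : ℝ → ℝ := fun v => linv FX v - linv FY v with hΔdef
  have hΔcont : ContinuousOn Δ (Ioo 0 1) :=
    (linv_continuousOn hFXc hFXm hFX0 hFX1).sub (linv_continuousOn hFYc hFYm hFY0 hFY1)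
  have hΔ2meas : AEStronglyMeasurable (fun v => Δ v ^ 2) (volume.restrict (Ioo 0 1)) :=
    (((hΔcont.pow 2).aemeasurable measurableSet_Ioo)).aestronglyMeasurable
  have hΔint : IntegrableOn (fun v => Δ v ^ 2) (Ioo (0:ℝ) 1) := by
    refine Integrable.mono' ((hmomX.const_mul 2).add (hmomY.const_mul 2)) hΔ2meas ?_
    refine Eventually.of_forall fun v => ?_
    rw [Real.norm_eq_abs, abs_of_nonneg (sq_nonneg _)]
    simp only [hΔdef, Pi.add_apply]
    nlinarith [sq_nonneg (linv FX v + linv FY v)]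
  set C : ℝ := ∫ v in Ioo (0:ℝ) 1, Δ v ^ 2 with hCdef
  have hC0 : 0 ≤ C := integral_nonneg fun v => sq_nonneg _
  have key : ∀ ε ∈ Set.Ioo (0:ℝ) 1, ∃ K ≥ (0:ℝ), ∀ n : ℕ, 1 ≤ n →
      eps (fun x => (FX x) ^ n) (fun x => (FY x) ^ n) ≤ K * (q / (1 - ε)) ^ (n - 1) := by
    intro ε hε
    have hε0 := hε.1
    have hε2 := hε.2
    have hε1 : 0 < 1 - ε := by linarith
    by_cases hcase : 1 - ε ≤ q
    · refine ⟨1, zero_le_one, fun n hn => ?_⟩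
      have hr1 : (1:ℝ) ≤ q / (1 - ε) := (one_le_div hε1).2 hcase
      calc eps (fun x => (FX x) ^ n) (fun x => (FY x) ^ n) ≤ 1 := eps_le_one _ _
        _ ≤ 1 * (q / (1 - ε)) ^ (n - 1) := by
            rw [one_mul]; exact one_le_pow₀ hr1
    · push_neg at hcase
      set v₀ : ℝ := (1 - ε + 1) / 2 with hv₀def
      have hv₀1 : v₀ < 1 := by rw [hv₀def]; linarith
      have hv₀ε : 1 - ε < v₀ := by rw [hv₀def]; linarith
      have hv₀q : q < v₀ := by linarith
      have hv₀0 : 0 < v₀ := by linarith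
      have hv₀Ioo : v₀ ∈ Ioo (0:ℝ) 1 := ⟨hv₀0, hv₀1⟩
      set x₀ : ℝ := linv FX v₀ with hx₀def
      set y₀ : ℝ := linv FY v₀ with hy₀def
      have hxy : x₀ < y₀ :=
        linv_cross hFXc hFYc hFXm hFYm hFX0 hFX1 hFY0 hFY1 hc hv₀Ioo hv₀q
      set y' : ℝ := (x₀ + y₀) / 2 with hy'def
      have hy1 : x₀ < y' := by rw [hy'def]; linarith
      have hy2 : y' < y₀ := by rw [hy'def]; linarith
      set b : ℝ := FX y' with hbdef
      have hb1 : b < 1 := F_lt_one hFXm hFX1 y'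
      have hFXx₀ : FX x₀ = v₀ := F_linv hFXc hFXm hFX0 hFX1 hv₀Ioo
      have hab : v₀ < b := by rw [← hFXx₀, hbdef]; exact hFXm hy1
      have hbIoo : b ∈ Ioo (0:ℝ) 1 := ⟨F_pos hFXm hFX0 y', hb1⟩
      set δ : ℝ := (y₀ - y') ^ 2 with hδdef
      have hδ0 : 0 < δ := by rw [hδdef]; exact pow_pos (by linarith : (0:ℝ) < y₀ - y') 2
      have hlinvb : linv FX b = y' := linv_eq_of hFXm hbdef.symm
      have hbound : ∀ v ∈ Ioo v₀ b, δ ≤ Δ v ^ 2 := by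
        intro v hv
        have hv01 : v ∈ Ioo (0:ℝ) 1 := ⟨lt_trans hv₀0 hv.1, lt_trans hv.2 hb1⟩
        have h1 : linv FX v ≤ y' := by
          rw [← hlinvb]
          exact linv_mono hFXc hFXm hFX0 hFX1 hv01 hbIoo hv.2.le
        have h2 : y₀ ≤ linv FY v :=
          linv_mono hFYc hFYm hFY0 hFY1 hv₀Ioo hv01 hv.1.le
        have hΔv : Δ v ≤ y' - y₀ := by simp only [hΔdef]; linarith
        rw [hδdef]
        nlinarith [sq_nonneg (Δ v + (y₀ - y'))]
      set r : ℝ := (1 - ε) / v₀ with hrdef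
      have hr0 : 0 ≤ r := by positivity
      have hr1 : r < 1 := (div_lt_one hv₀0).2 hv₀ε
      set K : ℝ := C / (δ * (b - v₀) * (1 - r)) with hKdef
      have hK0 : 0 ≤ K := by
        apply div_nonneg hC0
        have : 0 < δ * (b - v₀) * (1 - r) := by
          apply mul_pos (mul_pos hδ0 (by linarith)) (by linarith)
        linarith
      refine ⟨K, hK0, fun n hn => ?_⟩
      obtain ⟨m, rfl⟩ : ∃ m, n = m + 1 := ⟨n - 1, (Nat.succ_pred_eq_of_pos hn).symm⟩
      simp only [Nat.add_sub_cancel]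
      have hn0 : m + 1 ≠ 0 := Nat.succ_ne_zero m
      have hρ0 : (0:ℝ) ≤ q / (1 - ε) := by positivity
      have hRHS0 : 0 ≤ K * (q / (1 - ε)) ^ m := mul_nonneg hK0 (pow_nonneg hρ0 m)
      unfold eps
      split_ifs with hD
      · exact hRHS0
      · set Fn : ℝ → ℝ := fun x => FX x ^ (m+1) with hFndef
        set Gn : ℝ → ℝ := fun x => FY x ^ (m+1) with hGndef
        set g : ℝ → ℝ := fun u => (linv Fn u - linv Gn u) ^ 2 with hgdef
        have hDint : IntegrableOn g (Ioo (0:ℝ) 1) := W2sq_integrable hD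
        have hD0 : 0 < W2sq Fn Gn :=
          lt_of_le_of_ne (integral_nonneg fun u => sq_nonneg _) (Ne.symm hD)
        have hg_eq : ∀ u ∈ Ioo (0:ℝ) 1, g u = Δ (u ^ (((m+1:ℕ)):ℝ)⁻¹) ^ 2 := by
          intro u hu
          simp only [hgdef, hΔdef]
          rw [linv_pow hFXc hFXm hFX0 hFX1 hn0 hu, linv_pow hFYc hFYm hFY0 hFY1 hn0 hu]
        -- denominator lower bound
        have hanbn : v₀ ^ (m+1) < b ^ (m+1) := by
          exact pow_lt_pow_left₀ hab hv₀0.le hn0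
        have hsubD : Ioo (v₀ ^ (m+1)) (b ^ (m+1)) ⊆ Ioo (0:ℝ) 1 := by
          intro u hu
          exact ⟨lt_trans (pow_pos hv₀0 _) hu.1,
            lt_trans hu.2 (pow_lt_one₀ hbIoo.1.le hb1 hn0)⟩
        have hptD : ∀ u ∈ Ioo (v₀ ^ (m+1)) (b ^ (m+1)), δ ≤ g u := by
          intro u hu
          have hu01 := hsubD hu
          rw [hg_eq u hu01]
          apply hbound
          constructor
          · have := Real.rpow_lt_rpow (pow_pos hv₀0 (m+1)).le hu.1
              (by positivity : (0:ℝ) < ((m+1:ℕ):ℝ)⁻¹)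
            rwa [Real.pow_rpow_inv_natCast hv₀0.le hn0] at this
          · have := Real.rpow_lt_rpow hu01.1.le hu.2
              (by positivity : (0:ℝ) < ((m+1:ℕ):ℝ)⁻¹)
            rwa [Real.pow_rpow_inv_natCast hbIoo.1.le hn0] at this
        have hDlow : δ * (b ^ (m+1) - v₀ ^ (m+1)) ≤ W2sq Fn Gn := by
          have hvol : (volume (Ioo (v₀ ^ (m+1)) (b ^ (m+1)))).toReal
              = b ^ (m+1) - v₀ ^ (m+1) := by
            rw [Real.volume_Ioo, ENNReal.toReal_ofReal (by linarith)]
          calc δ * (b ^ (m+1) - v₀ ^ (m+1))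
              = δ * (volume (Ioo (v₀ ^ (m+1)) (b ^ (m+1)))).toReal := by rw [hvol]
            _ ≤ ∫ u in Ioo (v₀ ^ (m+1)) (b ^ (m+1)), g u :=
                setIntegral_ge_of_const_le_real measurableSet_Ioo
                  (measure_Ioo_lt_top).ne hptD (hDint.mono_set hsubD)
            _ ≤ W2sq Fn Gn :=
                setIntegral_mono_set hDint (Eventually.of_forall fun u => sq_nonneg _)
                  (HasSubset.Subset.eventuallyLE hsubD)
        -- numerator upper bound
        have hqn1 : q ^ (m+1) < 1 := pow_lt_one₀ hq0.le hq1 hn0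
        have hNsub : {u ∈ Ioo (0:ℝ) 1 | linv Gn u < linv Fn u} ⊆ Ioc 0 (q ^ (m+1)) := by
          rintro u ⟨hu01, hlt⟩
          refine ⟨hu01.1, ?_⟩
          by_contra h
          push_neg at h
          set w : ℝ := u ^ (((m+1:ℕ)):ℝ)⁻¹ with hwdef
          have hw01 : w ∈ Ioo (0:ℝ) 1 :=
            ⟨Real.rpow_pos_of_pos hu01.1 _, Real.rpow_lt_one hu01.1.le hu01.2 (by positivity)⟩
          have hqw : q < w := by
            have := Real.rpow_lt_rpow (pow_pos hq0 (m+1)).le h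
              (by positivity : (0:ℝ) < ((m+1:ℕ):ℝ)⁻¹)
            rwa [Real.pow_rpow_inv_natCast hq0.le hn0] at this
          have hcross := linv_cross hFXc hFYc hFXm hFYm hFX0 hFX1 hFY0 hFY1 hc hw01 hqw
          rw [linv_pow hFXc hFXm hFX0 hFX1 hn0 hu01,
            linv_pow hFYc hFYm hFY0 hFY1 hn0 hu01] at hlt
          exact absurd hlt (not_lt.2 hcross.le)
        have hIocsub : Ioc (0:ℝ) (q ^ (m+1)) ⊆ Ioo (0:ℝ) 1 :=
          fun u hu => ⟨hu.1, lt_of_le_of_lt hu.2 hqn1⟩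
        have hN1 : (∫ u in {u ∈ Ioo (0:ℝ) 1 | linv Gn u < linv Fn u}, g u)
            ≤ ∫ u in Ioc (0:ℝ) (q ^ (m+1)), g u :=
          setIntegral_mono_set (hDint.mono_set hIocsub)
            (Eventually.of_forall fun u => sq_nonneg _)
            (HasSubset.Subset.eventuallyLE hNsub)
        have hIocIoo : (∫ u in Ioc (0:ℝ) (q ^ (m+1)), g u)
            = ∫ u in Ioo (0:ℝ) (q ^ (m+1)), g u := integral_Ioc_eq_integral_Ioo
        -- substitution
        have himg : (fun v : ℝ => v ^ (m+1)) '' (Ioo (0:ℝ) q) = Ioo (0:ℝ) (q ^ (m+1)) := by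
          ext u
          constructor
          · rintro ⟨v, hv, rfl⟩
            exact ⟨pow_pos hv.1 _, pow_lt_pow_left₀ hv.2 hv.1.le hn0⟩
          · intro hu
            refine ⟨u ^ (((m+1:ℕ)):ℝ)⁻¹, ⟨Real.rpow_pos_of_pos hu.1 _, ?_⟩,
              Real.rpow_inv_natCast_pow hu.1.le hn0⟩
            have := Real.rpow_lt_rpow hu.1.le hu.2
              (by positivity : (0:ℝ) < ((m+1:ℕ):ℝ)⁻¹)
            rwa [Real.pow_rpow_inv_natCast hq0.le hn0] at this
        have hsubst : (∫ u in Ioo (0:ℝ) (q ^ (m+1)), g u)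
            = ∫ v in Ioo (0:ℝ) q, |((m+1:ℕ):ℝ) * v ^ m| • g (v ^ (m+1)) := by
          rw [← himg]
          exact integral_image_eq_integral_abs_deriv_smul measurableSet_Ioo
            (fun v _ => by simpa using (hasDerivAt_pow (m+1) v).hasDerivWithinAt)
            ((pow_left_strictMonoOn₀ hn0).injOn.mono fun v hv => hv.1.le) g
        have hsub01 : Ioo (0:ℝ) q ⊆ Ioo (0:ℝ) 1 := fun v hv => ⟨hv.1, lt_trans hv.2 hq1⟩
        have hpt : ∀ v ∈ Ioo (0:ℝ) q,
            |((m+1:ℕ):ℝ) * v ^ m| • g (v ^ (m+1)) = ((m+1:ℕ):ℝ) * v ^ m * Δ v ^ 2 := by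
          intro v hv
          have hv01 := hsub01 hv
          have hvn01 : v ^ (m+1) ∈ Ioo (0:ℝ) 1 :=
            ⟨pow_pos hv01.1 _, pow_lt_one₀ hv01.1.le hv01.2 hn0⟩
          rw [smul_eq_mul, abs_of_nonneg (mul_nonneg (by positivity) (pow_nonneg hv01.1.le m)), hg_eq _ hvn01,
            Real.pow_rpow_inv_natCast hv01.1.le hn0]
        have hsubst2 : (∫ v in Ioo (0:ℝ) q, |((m+1:ℕ):ℝ) * v ^ m| • g (v ^ (m+1)))
            = ∫ v in Ioo (0:ℝ) q, ((m+1:ℕ):ℝ) * v ^ m * Δ v ^ 2 :=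
          setIntegral_congr_fun measurableSet_Ioo hpt
        -- integrate the bound
        have hψint : IntegrableOn (fun v => ((m+1:ℕ):ℝ) * q ^ m * Δ v ^ 2) (Ioo (0:ℝ) q) :=
          (hΔint.mono_set hsub01).const_mul _
        have hφmeas : AEStronglyMeasurable (fun v => ((m+1:ℕ):ℝ) * v ^ m * Δ v ^ 2)
            (volume.restrict (Ioo (0:ℝ) q)) := by
          apply AEStronglyMeasurable.mul
          · exact (continuous_const.mul (continuous_pow m)).aestronglyMeasurable
          · exact hΔ2meas.mono_measure (Measure.restrict_mono hsub01 le_rfl)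
        have hφint : IntegrableOn (fun v => ((m+1:ℕ):ℝ) * v ^ m * Δ v ^ 2) (Ioo (0:ℝ) q) := by
          refine Integrable.mono' hψint hφmeas ?_
          refine (ae_restrict_iff' measurableSet_Ioo).2 (Eventually.of_forall fun v hv => ?_)
          rw [Real.norm_eq_abs, abs_of_nonneg (mul_nonneg (mul_nonneg (by positivity)
            (pow_nonneg hv.1.le m)) (sq_nonneg _))]
          have h1 : v ^ m ≤ q ^ m := pow_le_pow_left₀ hv.1.le hv.2.le m
          exact mul_le_mul_of_nonneg_right
            (mul_le_mul_of_nonneg_left h1 (by positivity)) (sq_nonneg _)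
        have hφle : (∫ v in Ioo (0:ℝ) q, ((m+1:ℕ):ℝ) * v ^ m * Δ v ^ 2)
            ≤ ∫ v in Ioo (0:ℝ) q, ((m+1:ℕ):ℝ) * q ^ m * Δ v ^ 2 := by
          refine setIntegral_mono_on hφint hψint measurableSet_Ioo fun v hv => ?_
          have h1 : v ^ m ≤ q ^ m := pow_le_pow_left₀ hv.1.le hv.2.le m
          exact mul_le_mul_of_nonneg_right
            (mul_le_mul_of_nonneg_left h1 (by positivity)) (sq_nonneg _)
        have hψval : (∫ v in Ioo (0:ℝ) q, ((m+1:ℕ):ℝ) * q ^ m * Δ v ^ 2)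
            ≤ ((m+1:ℕ):ℝ) * q ^ m * C := by
          rw [integral_const_mul]
          have hsub : (∫ v in Ioo (0:ℝ) q, Δ v ^ 2) ≤ C :=
            setIntegral_mono_set hΔint (Eventually.of_forall fun v => sq_nonneg _)
              (HasSubset.Subset.eventuallyLE hsub01)
          have : (0:ℝ) ≤ ((m+1:ℕ):ℝ) * q ^ m := by positivity
          exact mul_le_mul_of_nonneg_left hsub this
        have hNle : (∫ u in {u ∈ Ioo (0:ℝ) 1 | linv Gn u < linv Fn u}, g u)
            ≤ ((m+1:ℕ):ℝ) * q ^ m * C := by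
          calc (∫ u in {u ∈ Ioo (0:ℝ) 1 | linv Gn u < linv Fn u}, g u)
              ≤ ∫ u in Ioc (0:ℝ) (q ^ (m+1)), g u := hN1
            _ = ∫ u in Ioo (0:ℝ) (q ^ (m+1)), g u := hIocIoo
            _ = ∫ v in Ioo (0:ℝ) q, |((m+1:ℕ):ℝ) * v ^ m| • g (v ^ (m+1)) := hsubst
            _ = ∫ v in Ioo (0:ℝ) q, ((m+1:ℕ):ℝ) * v ^ m * Δ v ^ 2 := hsubst2
            _ ≤ ∫ v in Ioo (0:ℝ) q, ((m+1:ℕ):ℝ) * q ^ m * Δ v ^ 2 := hφle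
            _ ≤ ((m+1:ℕ):ℝ) * q ^ m * C := hψval
        -- combine
        have hN0 : 0 ≤ ∫ u in {u ∈ Ioo (0:ℝ) 1 | linv Gn u < linv Fn u}, g u :=
          integral_nonneg fun u => sq_nonneg _
        have hdenlow : δ * (b - v₀) * v₀ ^ m ≤ δ * (b ^ (m+1) - v₀ ^ (m+1)) := by
          have h1 : v₀ ^ m * b ≤ b ^ m * b :=
            mul_le_mul_of_nonneg_right (pow_le_pow_left₀ hv₀0.le hab.le m) (by linarith)
          have h4 : (b - v₀) * v₀ ^ m ≤ b ^ (m+1) - v₀ ^ (m+1) := by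
            have h2 : b ^ (m+1) - v₀ ^ (m+1) = b ^ m * b - v₀ ^ m * v₀ := by ring
            have h3 : (b - v₀) * v₀ ^ m = v₀ ^ m * b - v₀ ^ m * v₀ := by ring
            rw [h2, h3]; linarith
          calc δ * (b - v₀) * v₀ ^ m = δ * ((b - v₀) * v₀ ^ m) := by ring
            _ ≤ δ * (b ^ (m+1) - v₀ ^ (m+1)) := mul_le_mul_of_nonneg_left h4 hδ0.le
        have hdpos : 0 < δ * (b - v₀) * v₀ ^ m := by
          apply mul_pos (mul_pos hδ0 (by linarith)) (pow_pos hv₀0 m)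
        have step1 : (∫ u in {u ∈ Ioo (0:ℝ) 1 | linv Gn u < linv Fn u}, g u) / W2sq Fn Gn
            ≤ (((m+1:ℕ):ℝ) * q ^ m * C) / (δ * (b - v₀) * v₀ ^ m) := by
          apply div_le_div₀ (by positivity) hNle hdpos
          calc δ * (b - v₀) * v₀ ^ m ≤ δ * (b ^ (m+1) - v₀ ^ (m+1)) := hdenlow
            _ ≤ W2sq Fn Gn := hDlow
        refine le_trans step1 ?_
        -- final algebra
        have hkey2 : ((m+1:ℕ):ℝ) * (1 - ε) ^ m * (1 - r) ≤ v₀ ^ m := by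
          have h := nat_mul_pow_le hr0 hr1 (m+1)
          simp only [Nat.add_sub_cancel] at h
          have h2 := mul_le_mul_of_nonneg_right h (pow_pos hv₀0 m).le
          rw [one_mul] at h2
          have hrv : r * v₀ = 1 - ε := by rw [hrdef]; field_simp
          calc ((m+1:ℕ):ℝ) * (1 - ε) ^ m * (1 - r)
              = ((m+1:ℕ):ℝ) * r ^ m * (1 - r) * v₀ ^ m := by rw [← hrv, mul_pow]; ring
            _ ≤ v₀ ^ m := h2
        have hpos2 : 0 < δ * (b - v₀) * (1 - r) * (1 - ε) ^ m := by
          apply mul_pos (mul_pos (mul_pos hδ0 (by linarith)) (by linarith))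
          exact pow_pos hε1 m
        have hfac : (0:ℝ) ≤ C * q ^ m * (δ * (b - v₀)) := by
          have : (0:ℝ) < δ * (b - v₀) := mul_pos hδ0 (by linarith)
          positivity
        rw [hKdef, div_pow q (1 - ε) m, div_mul_div_comm, div_le_div_iff₀ hdpos hpos2]
        calc ((m+1:ℕ):ℝ) * q ^ m * C * (δ * (b - v₀) * (1 - r) * (1 - ε) ^ m)
            = C * q ^ m * (δ * (b - v₀)) * (((m+1:ℕ):ℝ) * (1 - ε) ^ m * (1 - r)) := by
              ring
          _ ≤ C * q ^ m * (δ * (b - v₀)) * v₀ ^ m := mul_le_mul_of_nonneg_left hkey2 hfac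
          _ = C * q ^ m * (δ * (b - v₀) * v₀ ^ m) := by ring
  refine ⟨key, ?_⟩
  obtain ⟨K, hK0, hK⟩ := key ((1 - q)/2) ⟨by linarith, by linarith⟩
  have h1ε : (0:ℝ) < 1 - (1 - q)/2 := by linarith
  have hρ0 : (0:ℝ) ≤ q / (1 - (1 - q)/2) := by positivity
  have hρ1 : q / (1 - (1 - q)/2) < 1 := (div_lt_one h1ε).2 (by linarith)
  have h1 : Tendsto (fun k : ℕ => (q / (1 - (1 - q)/2)) ^ k) atTop (nhds 0) :=
    tendsto_pow_atTop_nhds_zero_of_lt_one hρ0 hρ1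
  have hsq : Tendsto (fun n : ℕ => K * (q / (1 - (1 - q)/2)) ^ (n - 1)) atTop (nhds 0) := by
    have h2 := (h1.comp (tendsto_sub_atTop_nat 1)).const_mul K
    simpa using h2
  exact squeeze_zero' (Eventually.of_forall fun n => eps_nonneg _ _)
    (by filter_upwards [eventually_ge_atTop 1] with n hn; exact hK n hn) hsq
end

section
/- Let γ_{i,n} → γ_i with |γ_{i,n}−γ_i| = O(1/n) for i = 1,…,p, where 0 ≤ γ_1 < γ_2 < ⋯ < γ_p ≤ 1, let α_1,…,α_p ∈ (0,1) with Σα_i = 1, and set φ_{n,𝛂,𝛄_n}(u) = Σ_{i=1}^p α_i φ_{n,γ_{i,n}}(u). Then for every ε > 0 there exists N ∈ ℕ such that for all n ≥ N the third derivative φ'''_{n,𝛂,𝛄_n}(u) ≥ 0 for all u ∈ [0,1] \ ∪_{i=1}^p (γ_i−ε, γ_i+ε); i.e., φ'_{n,𝛂,𝛄_n} is convex on the complement of ε-neighborhoods of the γ_i. The key computation: φ'''_{n,γ}(u) = n(n−1)(n−2)C(n−1,m)u^{m−2}(1−u)^{n−m−3}(u−α_n)(u−β_n) with m = ⌊(n−1)γ⌋,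 where α_n, β_n are the roots of u² − (m/(n−2))(1 + (n−3)/(n−1))u + m(m−1)/((n−1)(n−2)) = 0, and both roots converge to γ as n → ∞. -/
open MeasureTheory Set Filter

noncomputable def D1 (M K : ℕ) (u : ℝ) : ℝ :=
  (M:ℝ)*u^(M-1)*(1-u)^K - (K:ℝ)*u^M*(1-u)^(K-1)

lemma hasDerivAt_g (M K : ℕ) (u : ℝ) :
    HasDerivAt (fun t : ℝ => t^M*(1-t)^K) (D1 M K u) u := by
  have h1 : HasDerivAt (fun t : ℝ => t^M) ((M:ℝ)*u^(M-1)) u := by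
    simpa using hasDerivAt_pow M u
  have h0 : HasDerivAt (fun t : ℝ => 1 - t) (-1) u := by
    simpa using (hasDerivAt_id u).const_sub 1
  have h2 := h0.pow K
  have := h1.mul h2
  exact this.congr_deriv (by unfold D1; simp only [Pi.pow_apply]; ring)

noncomputable def D2 (M K : ℕ) (u : ℝ) : ℝ :=
  (M:ℝ) * D1 (M-1) K u - (K:ℝ) * D1 M (K-1) u

lemma hasDerivAt_D1 (M K : ℕ) (u : ℝ) : HasDerivAt (D1 M K) (D2 M K u) u := by
  have h1 := (hasDerivAt_g (M-1) K u).const_mul (M:ℝ)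
  have h2 := (hasDerivAt_g M (K-1) u).const_mul (K:ℝ)
  have hfun : (D1 M K) = fun t : ℝ =>
      (M:ℝ) * (t^(M-1)*(1-t)^K) - (K:ℝ)*(t^M*(1-t)^(K-1)) := by
    funext t; unfold D1; ring
  rw [hfun]
  exact h1.sub h2

noncomputable def Qr (M K : ℕ) (u : ℝ) : ℝ :=
  (M:ℝ)*((M:ℝ)-1)*(1-u)^2 - 2*(M:ℝ)*(K:ℝ)*u*(1-u) + (K:ℝ)*((K:ℝ)-1)*u^2

lemma key_id (M K : ℕ) (u : ℝ) :
    u^2*(1-u)^2 * D2 M K u = u^M * (1-u)^K * Qr M K u := by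
  rcases M with _|_|m <;> rcases K with _|_|k <;>
    simp only [D2, D1, Qr, Nat.add_sub_cancel, Nat.zero_sub, Nat.succ_sub_one] <;>
    push_cast <;> ring

lemma Qr_pos (M K : ℕ) (u : ℝ) (hS : 0 < M + K)
    (h : 1/4 < ((M:ℝ)+K-1)*(u - (M:ℝ)/((M:ℝ)+K))^2) : 0 < Qr M K u := by
  have hs : (0:ℝ) < (M:ℝ) + K := by exact_mod_cast hS
  have hQeq : Qr M K u
      = ((M:ℝ)+K)*((M:ℝ)+K-1)*(u - (M:ℝ)/((M:ℝ)+K))^2 - (M:ℝ)*K/((M:ℝ)+K) := by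
    unfold Qr; field_simp; ring
  have h4 : 4*(M:ℝ)*K ≤ ((M:ℝ)+K)^2 := by nlinarith [sq_nonneg ((M:ℝ)-(K:ℝ))]
  have hdiv : (M:ℝ)*K/((M:ℝ)+K) ≤ ((M:ℝ)+K)/4 := by
    rw [div_le_div_iff₀ hs (by norm_num)]
    nlinarith
  rw [hQeq]
  nlinarith [mul_lt_mul_of_pos_left h hs]

lemma D2_nonneg (M K : ℕ) (u : ℝ) (h0 : 0 ≤ u) (h1 : u ≤ 1)
    (hQ : 0 < Qr M K u) : 0 ≤ D2 M K u := by
  rcases eq_or_lt_of_le h0 with h|h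
  · -- u = 0
    subst h
    simp only [Qr] at hQ
    norm_num at hQ
    have hM : 2 ≤ M := by
      by_contra hc
      push_neg at hc
      interval_cases M <;> norm_num at hQ
    obtain ⟨m, rfl⟩ : ∃ m, M = m + 2 := ⟨M - 2, by omega⟩
    simp only [D2, D1, Nat.add_sub_cancel]
    norm_num [pow_succ]
    positivity
  rcases eq_or_lt_of_le h1 with h'|h'
  · -- u = 1
    rw [h'] at hQ ⊢
    simp only [Qr] at hQ
    norm_num at hQ
    have hK : 2 ≤ K := by
      by_contra hc
      push_neg at hc
      interval_cases K <;> norm_num at hQ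
    obtain ⟨k, rfl⟩ : ∃ k, K = k + 2 := ⟨K - 2, by omega⟩
    simp only [D2, D1, Nat.add_sub_cancel]
    norm_num [pow_succ]
    positivity
  · have key := key_id M K u
    have hpos : 0 < u^2*(1-u)^2 := by
      have : 0 < 1 - u := by linarith
      positivity
    have hrhs : 0 ≤ u^M * (1-u)^K * Qr M K u := by
      have h1u : (0:ℝ) ≤ 1 - u := by linarith
      exact mul_nonneg (mul_nonneg (pow_nonneg h0 _) (pow_nonneg h1u _)) hQ.le
    nlinarith [key, hpos, hrhs, mul_pos hpos hpos]

set_option maxHeartbeats 1000000 in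
/-- Convexity of the derivative of the mixture distortion function away from the
points `γ_1 < ⋯ < γ_p`: for every `ε > 0` there is `N` such that for `n ≥ N` the third
derivative of `φ_{n,𝛂,𝛄_n} = Σᵢ αᵢ φ_{n,γ_{i,n}}` is nonnegative on
`[0,1] \ ∪ᵢ (γᵢ−ε, γᵢ+ε)`, i.e. `φ'_{n,𝛂,𝛄_n}` is convex there. -/
theorem stmt18 (p : ℕ) (hp : 1 ≤ p)
    (γ : Fin p → ℝ) (hγrange : ∀ i, γ i ∈ Set.Icc (0:ℝ) 1)
    (hγmono : ∀ i j : Fin p, i < j → γ i < γ j)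
    (γseq : Fin p → ℕ → ℝ) (hseqrange : ∀ i n, γseq i n ∈ Set.Icc (0:ℝ) 1)
    (htend : ∀ i, Tendsto (γseq i) atTop (nhds (γ i)))
    (hrate : ∀ i, ∃ K > (0:ℝ), ∃ N : ℕ, ∀ n ≥ N, |γseq i n - γ i| ≤ K / n)
    (α : Fin p → ℝ) (hα : ∀ i, α i ∈ Set.Ioo (0:ℝ) 1) (hsum : ∑ i, α i = 1) :
    ∀ ε > (0:ℝ), ∃ N : ℕ, ∀ n ≥ N,
      ∀ u ∈ Set.Icc (0:ℝ) 1 \ ⋃ i, Set.Ioo (γ i - ε) (γ i + ε),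
        0 ≤ deriv (deriv (fun v => ∑ i, α i * dphi n (γseq i n) v)) u := by
  intro ε hε
  -- eventual conditions on n
  have hev1 : ∀ᶠ n : ℕ in atTop, 4/ε + 3 ≤ (n:ℝ) :=
    tendsto_natCast_atTop_atTop.eventually_ge_atTop _
  have hev2 : ∀ᶠ n : ℕ in atTop, 1/ε^2 + 3 ≤ (n:ℝ) :=
    tendsto_natCast_atTop_atTop.eventually_ge_atTop _
  have hev3 : ∀ᶠ n : ℕ in atTop, ∀ i, |γseq i n - γ i| < ε/4 := by
    rw [eventually_all]
    intro i
    have := Metric.tendsto_atTop.mp (htend i) (ε/4) (by positivity)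
    obtain ⟨N, hN⟩ := this
    filter_upwards [eventually_ge_atTop N] with n hn
    have := hN n hn
    rwa [Real.dist_eq] at this
  obtain ⟨N, hN⟩ := eventually_atTop.mp ((hev1.and hev2).and hev3)
  refine ⟨N, fun n hn u hu => ?_⟩
  obtain ⟨⟨hn1, hn2⟩, hn3⟩ := hN n hn
  have hn3' : (3:ℝ) ≤ (n:ℝ) := by
    have : (0:ℝ) < 4/ε := by positivity
    linarith
  have hn3n : 3 ≤ n := by exact_mod_cast hn3'
  obtain ⟨⟨hu0, hu1⟩, hu2⟩ := hu
  -- per-index data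
  set M : Fin p → ℕ := fun i => (⌊((n : ℝ) - 1) * γseq i n⌋).toNat with hM
  set Kf : Fin p → ℕ := fun i => n - 1 - M i with hKf
  set C : Fin p → ℝ := fun i => (n : ℝ) * ((n - 1).choose (M i) : ℝ) with hC
  have hMle : ∀ i, M i ≤ n - 1 := by
    intro i
    have hx : ((n : ℝ) - 1) * γseq i n ≤ ((n:ℝ) - 1) := by
      have h1 := (hseqrange i n).2
      nlinarith [(hseqrange i n).1]
    have hfl : (⌊((n : ℝ) - 1) * γseq i n⌋ : ℝ) ≤ (n:ℝ) - 1 := (Int.floor_le _).trans hx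
    have hflz : ⌊((n : ℝ) - 1) * γseq i n⌋ ≤ (n:ℤ) - 1 := by exact_mod_cast hfl
    simp only [hM]
    omega
  have hMK : ∀ i, M i + Kf i = n - 1 := by
    intro i
    have := hMle i
    simp only [hKf]
    omega
  have hc1 : ((n - 1 : ℕ) : ℝ) = (n:ℝ) - 1 := by
    have h1 : 1 ≤ n := by omega
    push_cast [h1]; ring
  have hn1' : (0:ℝ) < (n:ℝ) - 1 := by linarith
  -- rewrite the function
  have hF : (fun v => ∑ i, α i * dphi n (γseq i n) v)
      = fun v => ∑ i, (α i * C i) * (v ^ (M i) * (1 - v) ^ (Kf i)) := by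
    funext v
    refine Finset.sum_congr rfl fun i _ => ?_
    simp only [dphi, hC, hM, hKf]
    ring
  have hd1 : ∀ v : ℝ, HasDerivAt (fun w => ∑ i, (α i * C i) * (w ^ (M i) * (1 - w) ^ (Kf i)))
      (∑ i, (α i * C i) * D1 (M i) (Kf i) v) v := by
    intro v
    exact HasDerivAt.fun_sum fun i _ => (hasDerivAt_g (M i) (Kf i) v).const_mul _
  have hderiv1 : deriv (fun v => ∑ i, α i * dphi n (γseq i n) v)
      = fun v => ∑ i, (α i * C i) * D1 (M i) (Kf i) v := by
    funext v; rw [hF]; exact (hd1 v).deriv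
  have hd2 : HasDerivAt (fun v => ∑ i, (α i * C i) * D1 (M i) (Kf i) v)
      (∑ i, (α i * C i) * D2 (M i) (Kf i) u) u :=
    HasDerivAt.fun_sum fun i _ => (hasDerivAt_D1 (M i) (Kf i) u).const_mul _
  rw [hderiv1, hd2.deriv]
  apply Finset.sum_nonneg
  intro i _
  have hαi := hα i
  have hCi : 0 ≤ C i := by
    simp only [hC]; positivity
  refine mul_nonneg (mul_nonneg hαi.1.le hCi) ?_
  apply D2_nonneg _ _ _ hu0 hu1
  -- cast of M i + Kf i
  have hSr : (M i : ℝ) + (Kf i : ℝ) = (n:ℝ) - 1 := by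
    rw [← Nat.cast_add, hMK i, hc1]
  apply Qr_pos
  · have := hMK i; omega
  · rw [hSr]
    set c : ℝ := (M i : ℝ) / ((n:ℝ) - 1) with hc
    -- floor facts
    have hx0 : 0 ≤ ((n:ℝ) - 1) * γseq i n :=
      mul_nonneg (by linarith) (hseqrange i n).1
    have hmr : ((M i : ℕ) : ℝ) = ((⌊((n:ℝ) - 1) * γseq i n⌋ : ℤ) : ℝ) := by
      have h := Int.toNat_of_nonneg (Int.floor_nonneg.mpr hx0)
      simp only [hM]
      exact_mod_cast congrArg (fun z : ℤ => (z : ℝ)) h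
    have hfl1 : ((⌊((n:ℝ) - 1) * γseq i n⌋ : ℤ) : ℝ) ≤ ((n:ℝ) - 1) * γseq i n :=
      Int.floor_le _
    have hfl2 : ((n:ℝ) - 1) * γseq i n - 1 < ((⌊((n:ℝ) - 1) * γseq i n⌋ : ℤ) : ℝ) :=
      Int.sub_one_lt_floor _
    have h1 : c ≤ γseq i n := by
      rw [hc, div_le_iff₀ hn1']
      nlinarith [hfl1, hmr]
    have h2 : γseq i n ≤ c + 1/((n:ℝ) - 1) := by
      rw [hc, ← add_div, le_div_iff₀ hn1']
      nlinarith [hfl2, hmr]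
    have hεn : 1/((n:ℝ) - 1) ≤ ε/4 := by
      rw [div_le_div_iff₀ hn1' (by norm_num : (0:ℝ) < 4)]
      have hfe : ε * (4/ε) = 4 := by field_simp
      nlinarith
    have hg : |γseq i n - γ i| < ε/4 := hn3 i
    rw [abs_lt] at hg
    -- u is outside the ε-interval around γ i
    have hu2' : u ≤ γ i - ε ∨ γ i + ε ≤ u := by
      simp only [mem_iUnion, mem_Ioo, not_exists] at hu2
      have := hu2 i
      push_neg at this
      rcases le_or_gt u (γ i - ε) with h | h
      · exact Or.inl h
      · exact Or.inr (this (by linarith))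
    have hsq : (ε/2)^2 < (u - c)^2 := by
      rcases hu2' with h | h
      · have hcu : ε/2 < c - u := by linarith
        nlinarith [hcu, hε]
      · have hcu : ε/2 < u - c := by linarith
        nlinarith [hcu, hε]
    have hn2' : 1/4 < ((n:ℝ) - 2) * (ε/2)^2 := by
      have hfe : (1/ε^2) * ε^2 = 1 := by field_simp
      nlinarith
    have hmono : ((n:ℝ) - 2) * (ε/2)^2 ≤ ((n:ℝ) - 2) * (u - c)^2 :=
      mul_le_mul_of_nonneg_left hsq.le (by linarith)
    have hr : (n:ℝ) - 1 - 1 = (n:ℝ) - 2 := by ring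
    rw [hr]
    linarith
end

section
/- Let γ_{i,n} → γ_i with |γ_{i,n}−γ_i| = O(1/n) for i = 1,…,p with γ_1 < ⋯ < γ_p, and let u_{i,j,n} be a crossing point of φ'_{n,γ_{i,n}} and φ'_{n,γ_{j,n}} between γ_i and γ_j (i ≠ j), i.e. φ'_{n,γ_{i,n}}(u_{i,j,n}) = φ'_{n,γ_{j,n}}(u_{i,j,n}). Then u_{i,j,n} converges as n → ∞ to the unique u_{i,j} ∈ (min(γ_i,γ_j), max(γ_i,γ_j)) satisfying ln((1−u_{i,j})/u_{i,j}) = (1/(γ_j−γ_i))∫_{γ_i}^{γ_j} ln((1−x)/x) dx; in particular u_{i,j} is strictly between γ_i and γ_j. -/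
open MeasureTheory Set Filter

open intervalIntegral Real

noncomputable def hfun : ℝ → ℝ := fun x => Real.log (1 - x) - Real.log x

lemma hfun_strictAntiOn : StrictAntiOn hfun (Set.Ioo (0:ℝ) 1) := by
  intro x hx y hy hxy
  have h1 : Real.log (1 - y) < Real.log (1 - x) :=
    Real.log_lt_log (by linarith [hy.2]) (by linarith)
  have h2 : Real.log x < Real.log y := Real.log_lt_log hx.1 hxy
  simp only [hfun]; linarith

lemma intInt_log01 : IntervalIntegrable Real.log volume 0 1 := by
  rw [intervalIntegrable_iff_integrableOn_Ioc_of_le (by norm_num)]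
  apply MeasureTheory.integrableOn_Ioc_of_intervalIntegral_norm_bounded_left
    (a := fun i : ℕ => 1/((i:ℝ)+1)) (l := atTop) (I := 1)
  · intro i
    have h0 : (0:ℝ) < 1/((i:ℝ)+1) := by positivity
    refine (ContinuousOn.integrableOn_Icc ?_).mono_set Ioc_subset_Icc_self
    exact Real.continuousOn_log.mono (fun x hx => by
      simp only [mem_compl_iff, mem_singleton_iff]; intro h; rw [h] at hx; exact absurd hx.1 (by linarith))
  · exact tendsto_one_div_add_atTop_nhds_zero_nat
  · filter_upwards with i
    set c : ℝ := 1/((i:ℝ)+1) with hc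
    have h0 : (0:ℝ) < c := by positivity
    have h1 : c ≤ 1 := by rw [hc]; rw [div_le_one (by positivity)]; linarith [Nat.cast_nonneg (α := ℝ) i]
    have e1 : (∫ x in Ioc c 1, ‖Real.log x‖) = ∫ x in c..1, ‖Real.log x‖ := by
      rw [intervalIntegral.integral_of_le h1]
    rw [e1]
    have e2 : (∫ x in c..1, ‖Real.log x‖) = ∫ x in c..1, -Real.log x := by
      apply intervalIntegral.integral_congr
      intro x hx
      rw [Set.uIcc_of_le h1] at hx
      have hx0 : 0 < x := lt_of_lt_of_le h0 hx.1
      have : Real.log x ≤ 0 := Real.log_nonpos (le_of_lt hx0) hx.2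
      simp only [Real.norm_eq_abs]; rw [abs_of_nonpos this]
    rw [e2, intervalIntegral.integral_neg, integral_log]
    have : c * Real.log c ≤ 0 := mul_nonpos_of_nonneg_of_nonpos (le_of_lt h0)
      (Real.log_nonpos (le_of_lt h0) h1)
    simp only [Real.log_one]
    nlinarith

lemma intInt_hfun01 : IntervalIntegrable hfun volume 0 1 := by
  have h1 : IntervalIntegrable (fun x : ℝ => Real.log (1 - x)) volume 0 1 := by
    have := intInt_log01.comp_sub_left 1
    simpa using this.symm
  exact h1.sub intInt_log01

lemma hfun_intInt (c d : ℝ) (hc : c ∈ Set.Icc (0:ℝ) 1) (hd : d ∈ Set.Icc (0:ℝ) 1) :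
    IntervalIntegrable hfun volume c d :=
  intInt_hfun01.mono_set (by
    rw [Set.uIcc_of_le (by norm_num : (0:ℝ) ≤ 1)]
    exact Set.uIcc_subset_Icc hc hd)

lemma ae_Icc_to_Ioo {c d : ℝ} {P : ℝ → Prop} (h : ∀ x ∈ Set.Ioo c d, P x) :
    ∀ᵐ x ∂(volume.restrict (Set.Icc c d)), P x := by
  rw [ae_restrict_iff' measurableSet_Icc]
  have h1 : ∀ᵐ x : ℝ, x ∉ ({c, d} : Set ℝ) := by
    rw [ae_iff]
    have : {x : ℝ | ¬ x ∉ ({c, d} : Set ℝ)} = ({c, d} : Set ℝ) := by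
      ext x; simp only [Set.mem_setOf_eq, not_not]
    rw [this]
    exact (Set.toFinite _).measure_zero volume
  filter_upwards [h1] with x hx hxcd
  simp only [Set.mem_insert_iff, Set.mem_singleton_iff, not_or] at hx
  exact h x ⟨lt_of_le_of_ne hxcd.1 (Ne.symm hx.1), lt_of_le_of_ne hxcd.2 hx.2⟩

lemma step_upper (n k : ℕ) (hn : 2 ≤ n) (hk1 : 1 ≤ k) (hk2 : k + 1 ≤ n) :
    (∫ x in ((k:ℝ)/n)..(((k:ℝ)+1)/n), hfun x) ≤ hfun ((k:ℝ)/n) * (1/n) := by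
  have hn0 : (0:ℝ) < n := by positivity
  have hkr : (1:ℝ) ≤ (k:ℝ) := by exact_mod_cast hk1
  have hkn : (k:ℝ) + 1 ≤ (n:ℝ) := by exact_mod_cast hk2
  have hmem : (k:ℝ)/n ∈ Set.Ioo (0:ℝ) 1 := by
    constructor
    · positivity
    · rw [div_lt_one hn0]; linarith
  have hle : (k:ℝ)/n ≤ ((k:ℝ)+1)/n := by apply div_le_div_of_nonneg_right <;> linarith
  have hint1 : IntervalIntegrable hfun volume ((k:ℝ)/n) (((k:ℝ)+1)/n) :=
    hfun_intInt _ _ ⟨le_of_lt hmem.1, le_of_lt hmem.2⟩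
      ⟨by positivity, by rw [div_le_one hn0]; linarith⟩
  have hmono := intervalIntegral.integral_mono_ae_restrict (f := hfun)
    (g := fun _ => hfun ((k:ℝ)/n)) (μ := volume) hle hint1 intervalIntegrable_const
    (ae_Icc_to_Ioo (fun x hx => by
      have hx01 : x ∈ Set.Ioo (0:ℝ) 1 := ⟨lt_trans hmem.1 hx.1,
        lt_of_lt_of_le hx.2 (by rw [div_le_one hn0]; linarith)⟩
      exact le_of_lt (hfun_strictAntiOn hmem hx01 hx.1)))
  calc (∫ x in ((k:ℝ)/n)..(((k:ℝ)+1)/n), hfun x)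
      ≤ ∫ _ in ((k:ℝ)/n)..(((k:ℝ)+1)/n), hfun ((k:ℝ)/n) := hmono
    _ = hfun ((k:ℝ)/n) * (1/n) := by
        rw [intervalIntegral.integral_const, smul_eq_mul,
          show ((k:ℝ)+1)/n - (k:ℝ)/n = 1/n from by field_simp; ring]
        ring

lemma step_lower (n k : ℕ) (hn : 2 ≤ n) (hk1 : 1 ≤ k) (hk2 : k + 1 ≤ n) :
    hfun ((k:ℝ)/n) * (1/n) ≤ ∫ x in (((k:ℝ)-1)/n)..((k:ℝ)/n), hfun x := by
  have hn0 : (0:ℝ) < n := by positivity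
  have hkr : (1:ℝ) ≤ (k:ℝ) := by exact_mod_cast hk1
  have hkn : (k:ℝ) + 1 ≤ (n:ℝ) := by exact_mod_cast hk2
  have hmem : (k:ℝ)/n ∈ Set.Ioo (0:ℝ) 1 := by
    constructor
    · positivity
    · rw [div_lt_one hn0]; linarith
  have hle : ((k:ℝ)-1)/n ≤ (k:ℝ)/n := by apply div_le_div_of_nonneg_right <;> linarith
  have hint1 : IntervalIntegrable hfun volume (((k:ℝ)-1)/n) ((k:ℝ)/n) :=
    hfun_intInt _ _ ⟨div_nonneg (by linarith) (le_of_lt hn0), by rw [div_le_one hn0]; linarith⟩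
      ⟨le_of_lt hmem.1, le_of_lt hmem.2⟩
  have hmono := intervalIntegral.integral_mono_ae_restrict (g := hfun)
    (f := fun _ => hfun ((k:ℝ)/n)) (μ := volume) hle intervalIntegrable_const hint1
    (ae_Icc_to_Ioo (fun x hx => by
      have h0 : (0:ℝ) ≤ ((k:ℝ)-1)/n := div_nonneg (by linarith) (le_of_lt hn0)
      have hx01 : x ∈ Set.Ioo (0:ℝ) 1 := ⟨lt_of_le_of_lt h0 hx.1, lt_trans hx.2 hmem.2⟩
      exact le_of_lt (hfun_strictAntiOn hx01 hmem hx.2)))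
  calc hfun ((k:ℝ)/n) * (1/n)
      = ∫ _ in (((k:ℝ)-1)/n)..((k:ℝ)/n), hfun ((k:ℝ)/n) := by
        rw [intervalIntegral.integral_const, smul_eq_mul,
          show (k:ℝ)/n - ((k:ℝ)-1)/n = 1/n from by field_simp; ring]
        ring
    _ ≤ _ := hmono

lemma log_choose_step (m k : ℕ) (hk : k + 1 ≤ m) :
    Real.log ((m.choose (k+1) : ℕ) : ℝ)
      = Real.log ((m.choose k : ℕ) : ℝ) + Real.log ((m:ℝ) - k) - Real.log ((k:ℝ)+1) := by
  have hkm : k ≤ m := le_trans (Nat.le_succ k) hk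
  have hcast : ((m.choose (k+1) : ℕ) : ℝ) * ((k:ℝ)+1) = ((m.choose k : ℕ) : ℝ) * ((m:ℝ) - k) := by
    have := Nat.choose_succ_right_eq m k
    have h2 : (((m.choose (k+1)) * (k+1) : ℕ) : ℝ) = (((m.choose k) * (m - k) : ℕ) : ℝ) := by
      exact_mod_cast congrArg (Nat.cast (R := ℝ)) this
    push_cast [Nat.cast_sub hkm] at h2
    linarith
  have hc1 : (0:ℝ) < ((m.choose (k+1) : ℕ) : ℝ) := by
    exact_mod_cast Nat.choose_pos hk
  have hc0 : (0:ℝ) < ((m.choose k : ℕ) : ℝ) := by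
    exact_mod_cast Nat.choose_pos hkm
  have hk1 : (0:ℝ) < (k:ℝ)+1 := by positivity
  have hmk : (0:ℝ) < (m:ℝ) - k := by
    have : (k:ℝ) + 1 ≤ (m:ℝ) := by exact_mod_cast hk
    linarith
  have := congrArg Real.log hcast
  rw [Real.log_mul (ne_of_gt hc1) (ne_of_gt hk1),
      Real.log_mul (ne_of_gt hc0) (ne_of_gt hmk)] at this
  linarith

lemma hfun_eval (n j : ℕ) (hj1 : 1 ≤ j) (hj : j + 1 ≤ n) :
    hfun ((j:ℝ)/n) = Real.log ((n:ℝ) - j) - Real.log (j:ℝ) := by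
  have hn' : 0 < n := by omega
  have hn0 : (0:ℝ) < n := by exact_mod_cast hn'
  have hjr : (1:ℝ) ≤ (j:ℝ) := by exact_mod_cast hj1
  have hjn : (j:ℝ) + 1 ≤ (n:ℝ) := by exact_mod_cast hj
  have h1 : 1 - (j:ℝ)/n = ((n:ℝ) - j)/n := by field_simp
  simp only [hfun]
  rw [h1, Real.log_div (by linarith) (ne_of_gt hn0),
      Real.log_div (by linarith) (ne_of_gt hn0)]
  ring

lemma telescope (n k1 k2 : ℕ) (hn : 2 ≤ n) (h12 : k1 ≤ k2) (h2 : k2 ≤ n - 1) :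
    ∑ i ∈ Finset.range (k2 - k1), hfun (((k1 + i + 1 : ℕ) : ℝ)/n)
      = Real.log (((n-1).choose k2 : ℕ) : ℝ) - Real.log (((n-1).choose k1 : ℕ) : ℝ) := by
  have hsum := Finset.sum_range_sub
    (f := fun j => Real.log (((n-1).choose (k1 + j) : ℕ) : ℝ)) (n := k2 - k1)
  rw [Nat.add_sub_cancel' h12] at hsum
  simp only [Nat.add_zero] at hsum
  rw [← hsum]
  apply Finset.sum_congr rfl
  intro i hi
  rw [Finset.mem_range] at hi
  have hle : k1 + i + 1 ≤ n - 1 := by omega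
  have hstep := log_choose_step (n-1) (k1 + i) (by omega)
  have heval := hfun_eval n (k1 + i + 1) (by omega) (by omega)
  have hcast1 : ((n:ℝ) - ((k1 + i + 1 : ℕ) : ℝ)) = (((n-1 : ℕ)):ℝ) - ((k1 + i : ℕ):ℝ) := by
    push_cast [Nat.cast_sub (by omega : 1 ≤ n)]
    ring
  have hcast2 : (((k1 + i + 1 : ℕ)) : ℝ) = ((k1 + i : ℕ):ℝ) + 1 := by push_cast; ring
  rw [heval, hcast1, hcast2, show k1 + (i+1) = (k1 + i) + 1 from by omega, hstep]
  ring

lemma cross_identity (n k1 k2 : ℕ) (v : ℝ) (h2 : 2 ≤ n) (h12 : k1 ≤ k2) (hk2 : k2 ≤ n - 1)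
    (hv : v ∈ Set.Ioo (0:ℝ) 1)
    (heq : (n:ℝ) * (((n-1).choose k1 : ℕ) : ℝ) * v ^ k1 * (1-v) ^ (n-1-k1)
         = (n:ℝ) * (((n-1).choose k2 : ℕ) : ℝ) * v ^ k2 * (1-v) ^ (n-1-k2)) :
    ((k2:ℝ) - k1) * hfun v
      = Real.log (((n-1).choose k2 : ℕ) : ℝ) - Real.log (((n-1).choose k1 : ℕ) : ℝ) := by
  set d := k2 - k1 with hd
  set C1 : ℝ := (((n-1).choose k1 : ℕ) : ℝ)
  set C2 : ℝ := (((n-1).choose k2 : ℕ) : ℝ)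
  set P : ℝ := (n:ℝ) * v ^ k1 * (1-v) ^ (n-1-k2) with hP
  have hv0 : (0:ℝ) < v := hv.1
  have hv1 : (0:ℝ) < 1 - v := by linarith [hv.2]
  have hPne : P ≠ 0 := by
    rw [hP]
    positivity
  rw [show n-1-k1 = (n-1-k2)+d from by omega,
      show v ^ k2 = v ^ (k1+d) from by rw [show k2 = k1 + d from by omega]] at heq
  have e1 : (n:ℝ) * C1 * v ^ k1 * (1-v) ^ ((n-1-k2)+d) = (C1 * (1-v)^d) * P := by
    rw [pow_add]; ring
  have e2 : (n:ℝ) * C2 * v ^ (k1+d) * (1-v) ^ (n-1-k2) = (C2 * v^d) * P := by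
    rw [pow_add]; ring
  rw [e1, e2] at heq
  have key : C1 * (1-v)^d = C2 * v^d := mul_right_cancel₀ hPne heq
  have hC1 : (0:ℝ) < C1 := by
    show (0:ℝ) < (((n-1).choose k1 : ℕ) : ℝ)
    exact_mod_cast Nat.choose_pos (le_trans h12 hk2)
  have hC2 : (0:ℝ) < C2 := by
    show (0:ℝ) < (((n-1).choose k2 : ℕ) : ℝ)
    exact_mod_cast Nat.choose_pos hk2
  have := congrArg Real.log key
  rw [Real.log_mul (ne_of_gt hC1) (by positivity),
      Real.log_mul (ne_of_gt hC2) (by positivity),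
      Real.log_pow, Real.log_pow] at this
  have hdc : ((k2:ℝ) - k1) = (d:ℝ) := by
    rw [hd]
    push_cast [Nat.cast_sub h12]
    ring
  rw [hdc]
  simp only [hfun]
  have hkd : k2 = k1 + d := by omega
  linarith [this]


noncomputable def kk (n : ℕ) (α : ℝ) : ℕ := (⌊((n : ℝ) - 1) * α⌋).toNat

lemma dphi_eq (n : ℕ) (α t : ℝ) :
    dphi n α t = (n : ℝ) * (((n - 1).choose (kk n α) : ℕ) : ℝ) * t ^ (kk n α)
      * (1 - t) ^ (n - 1 - kk n α) := rfl

lemma floor_facts (x : ℝ) (hx : 0 ≤ x) :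
    ((⌊x⌋.toNat : ℕ) : ℝ) ≤ x ∧ x < ((⌊x⌋.toNat : ℕ) : ℝ) + 1 := by
  have h0 : 0 ≤ ⌊x⌋ := Int.floor_nonneg.2 hx
  have he : ((⌊x⌋.toNat : ℕ) : ℝ) = ((⌊x⌋ : ℤ) : ℝ) := by exact_mod_cast Int.toNat_of_nonneg h0
  rw [he]
  exact ⟨Int.floor_le x, Int.lt_floor_add_one x⟩

lemma kk_le (n : ℕ) (hn : 1 ≤ n) (γ : ℝ) (hγ0 : 0 ≤ γ) (hγ : γ ≤ 1) : kk n γ ≤ n - 1 := by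
  have hn0 : (0:ℝ) ≤ (n:ℝ) - 1 := by
    have : (1:ℝ) ≤ (n:ℝ) := by exact_mod_cast hn
    linarith
  have h1 : ((n:ℝ)-1)*γ ≤ ((n-1:ℕ):ℝ) := by
    rw [Nat.cast_sub hn]
    push_cast
    nlinarith
  have h2 := Int.floor_le_floor h1
  rw [Int.floor_natCast] at h2
  exact Int.toNat_le.2 h2

lemma kk_facts (n : ℕ) (γ : ℝ) (h : 0 ≤ ((n:ℝ)-1)*γ) :
    ((kk n γ : ℕ):ℝ) ≤ ((n:ℝ)-1)*γ ∧ ((n:ℝ)-1)*γ < ((kk n γ : ℕ):ℝ) + 1 :=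
  floor_facts _ h

lemma kk_div_tendsto (γ : ℕ → ℝ) (c : ℝ) (hr : ∀ n, γ n ∈ Set.Icc (0:ℝ) 1)
    (ht : Tendsto γ atTop (nhds c)) :
    Tendsto (fun n => ((kk n (γ n) : ℕ):ℝ)/n) atTop (nhds c) := by
  have h1 : Tendsto (fun n:ℕ => 1 - 1/(n:ℝ)) atTop (nhds 1) := by
    simpa using tendsto_const_nhds.sub (tendsto_one_div_atTop_nhds_zero_nat (𝕜 := ℝ))
  have hupper : Tendsto (fun n : ℕ => (1 - 1/(n:ℝ)) * γ n) atTop (nhds c) := by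
    simpa using h1.mul ht
  have hlower : Tendsto (fun n : ℕ => (1 - 1/(n:ℝ)) * γ n - 1/n) atTop (nhds c) := by
    simpa using hupper.sub tendsto_one_div_atTop_nhds_zero_nat
  apply tendsto_of_tendsto_of_tendsto_of_le_of_le' hlower hupper
  · filter_upwards [eventually_ge_atTop 1] with n hn
    have hn1 : (1:ℝ) ≤ n := by exact_mod_cast hn
    have hn0 : (0:ℝ) < n := by linarith
    have hx : 0 ≤ ((n:ℝ)-1) * γ n := mul_nonneg (by linarith) (hr n).1
    have hf := (kk_facts n (γ n) hx).2
    have h2 : (((n:ℝ)-1)*γ n - 1)/n ≤ ((kk n (γ n) : ℕ):ℝ)/n := by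
      apply div_le_div_of_nonneg_right ?_ hn0.le
      linarith
    calc (1 - 1/(n:ℝ)) * γ n - 1/n = (((n:ℝ)-1)*γ n - 1)/n := by
          field_simp
      _ ≤ _ := h2
  · filter_upwards [eventually_ge_atTop 1] with n hn
    have hn1 : (1:ℝ) ≤ n := by exact_mod_cast hn
    have hn0 : (0:ℝ) < n := by linarith
    have hx : 0 ≤ ((n:ℝ)-1) * γ n := mul_nonneg (by linarith) (hr n).1
    have hf := (kk_facts n (γ n) hx).1
    have h2 : ((kk n (γ n) : ℕ):ℝ)/n ≤ (((n:ℝ)-1)*γ n)/n :=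
      div_le_div_of_nonneg_right hf hn0.le
    calc ((kk n (γ n) : ℕ):ℝ)/n ≤ (((n:ℝ)-1)*γ n)/n := h2
      _ = (1 - 1/(n:ℝ)) * γ n := by field_simp

lemma F_tendsto (w : ℕ → ℝ) (p : ℝ) (hp : p ∈ Set.Icc (0:ℝ) 1)
    (hw : Tendsto w atTop (nhds p)) (hmem : ∀ᶠ n in atTop, w n ∈ Set.Icc (0:ℝ) 1) :
    Tendsto (fun n => ∫ x in (0:ℝ)..(w n), hfun x) atTop
      (nhds (∫ x in (0:ℝ)..p, hfun x)) := by
  have hFcont : ContinuousOn (fun t => ∫ x in (0:ℝ)..t, hfun x) (Set.Icc 0 1) := by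
    have := intervalIntegral.continuousOn_primitive_interval' intInt_hfun01
      (by simp : (0:ℝ) ∈ Set.uIcc 0 1)
    simpa [Set.uIcc_of_le (zero_le_one (α := ℝ))] using this
  exact ((hFcont p hp).tendsto).comp
    (tendsto_nhdsWithin_of_tendsto_nhds_of_eventually_within _ hw hmem)

/-- Crossing points of the densities of two order statistics: if `γ_{i,n} → a` and
`γ_{j,n} → b` with `a < b`, rates `O(1/n)`, and `u_n ∈ (a,b)` is a crossing point of
`φ'_{n,γ_{i,n}}` and `φ'_{n,γ_{j,n}}`, then `u_n` converges to the unique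
`L ∈ (a,b)` with `ln((1−L)/L) = (1/(b−a)) ∫_a^b ln((1−x)/x) dx`. -/
theorem stmt19 (a b : ℝ) (ha : a ∈ Set.Icc (0:ℝ) 1) (hb : b ∈ Set.Icc (0:ℝ) 1)
    (hab : a < b)
    (γ1 γ2 : ℕ → ℝ)
    (hγ1range : ∀ n, γ1 n ∈ Set.Icc (0:ℝ) 1) (hγ2range : ∀ n, γ2 n ∈ Set.Icc (0:ℝ) 1)
    (hγ1tend : Tendsto γ1 atTop (nhds a)) (hγ2tend : Tendsto γ2 atTop (nhds b))
    (hrate1 : ∃ K > (0:ℝ), ∃ N : ℕ, ∀ n ≥ N, |γ1 n - a| ≤ K / n)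
    (hrate2 : ∃ K > (0:ℝ), ∃ N : ℕ, ∀ n ≥ N, |γ2 n - b| ≤ K / n)
    (u : ℕ → ℝ)
    (hcross : ∀ᶠ n in atTop,
      u n ∈ Set.Ioo a b ∧ dphi n (γ1 n) (u n) = dphi n (γ2 n) (u n)) :
    ∃ L ∈ Set.Ioo a b, Tendsto u atTop (nhds L) ∧
      Real.log ((1 - L) / L) = (1 / (b - a)) * ∫ x in a..b, Real.log ((1 - x) / x) ∧
      ∀ L' ∈ Set.Ioo a b,
        Real.log ((1 - L') / L') = (1 / (b - a)) * ∫ x in a..b, Real.log ((1 - x) / x) →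
        L' = L := by
  obtain ⟨ha0, ha1⟩ := ha
  obtain ⟨hb0, hb1⟩ := hb
  have hba : (0:ℝ) < b - a := by linarith
  set I : ℝ := ∫ x in a..b, hfun x with hIdef
  set M : ℝ := (1/(b-a)) * I with hMdef
  -- relation between the two integrals
  have hIeq : (∫ x in a..b, Real.log ((1-x)/x)) = I := by
    rw [hIdef]
    apply intervalIntegral.integral_congr
    intro x hx
    rw [Set.uIcc_of_le (le_of_lt hab)] at hx
    by_cases hx0 : x = 0
    · subst hx0; simp [hfun, div_zero]
    by_cases hx1 : x = 1
    · subst hx1; simp [hfun]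
    have hx0' : 0 < x := lt_of_le_of_ne (le_trans ha0 hx.1) (Ne.symm hx0)
    have hx1' : x < 1 := lt_of_le_of_ne (le_trans hx.2 hb1) hx1
    show Real.log ((1-x)/x) = hfun x
    simp only [hfun]
    rw [Real.log_div (by linarith) (ne_of_gt hx0')]
  -- floor index facts
  have hk1le : ∀ n, 1 ≤ n → kk n (γ1 n) ≤ n - 1 :=
    fun n hn => kk_le n hn _ (hγ1range n).1 (hγ1range n).2
  have hk2le : ∀ n, 1 ≤ n → kk n (γ2 n) ≤ n - 1 :=
    fun n hn => kk_le n hn _ (hγ2range n).1 (hγ2range n).2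
  have t1 : Tendsto (fun n => ((kk n (γ1 n) : ℕ):ℝ)/n) atTop (nhds a) :=
    kk_div_tendsto γ1 a hγ1range hγ1tend
  have t2 : Tendsto (fun n => ((kk n (γ2 n) : ℕ):ℝ)/n) atTop (nhds b) :=
    kk_div_tendsto γ2 b hγ2range hγ2tend
  have t1p : Tendsto (fun n => (((kk n (γ1 n) : ℕ):ℝ)+1)/n) atTop (nhds a) := by
    have h := t1.add tendsto_one_div_atTop_nhds_zero_nat
    rw [add_zero] at h
    exact h.congr (fun n => (add_div _ _ _).symm)
  have t2p : Tendsto (fun n => (((kk n (γ2 n) : ℕ):ℝ)+1)/n) atTop (nhds b) := by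
    have h := t2.add tendsto_one_div_atTop_nhds_zero_nat
    rw [add_zero] at h
    exact h.congr (fun n => (add_div _ _ _).symm)
  have t3 : Tendsto (fun n => (((kk n (γ2 n) : ℕ):ℝ) - ((kk n (γ1 n) : ℕ):ℝ))/n)
      atTop (nhds (b-a)) :=
    (t2.sub t1).congr (fun n => (sub_div _ _ _).symm)
  have hevlt : ∀ᶠ n in atTop, kk n (γ1 n) < kk n (γ2 n) := by
    filter_upwards [t3.eventually_const_lt hba, eventually_ge_atTop 1] with n h3 hn
    have hn0 : (0:ℝ) < n := by exact_mod_cast hn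
    have hpos : (0:ℝ) < ((kk n (γ2 n) : ℕ):ℝ) - ((kk n (γ1 n) : ℕ):ℝ) := by
      by_contra hcon
      push_neg at hcon
      have : (((kk n (γ2 n) : ℕ):ℝ) - ((kk n (γ1 n) : ℕ):ℝ))/n ≤ 0 :=
        div_nonpos_of_nonpos_of_nonneg hcon hn0.le
      linarith
    have : ((kk n (γ1 n) : ℕ):ℝ) < ((kk n (γ2 n) : ℕ):ℝ) := by linarith
    exact_mod_cast this
  -- the Riemann sum
  set S : ℕ → ℝ := fun n => ∑ i ∈ Finset.range (kk n (γ2 n) - kk n (γ1 n)),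
      hfun (((kk n (γ1 n) + i + 1 : ℕ) : ℝ)/n) with hSdef
  -- upper bound
  have hup : ∀ᶠ n in atTop, S n / n ≤
      ∫ x in (((kk n (γ1 n) : ℕ):ℝ)/n)..(((kk n (γ2 n) : ℕ):ℝ)/n), hfun x := by
    filter_upwards [eventually_ge_atTop 2, hevlt] with n hn2 hlt
    have hn1 : 1 ≤ n := by omega
    have hn0 : (0:ℝ) < n := by exact_mod_cast (by omega : 0 < n)
    have hkq := hk2le n hn1
    have hadj : ∀ i, i < kk n (γ2 n) - kk n (γ1 n) →
        IntervalIntegrable hfun volume (((kk n (γ1 n) + i : ℕ):ℝ)/n)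
          (((kk n (γ1 n) + (i+1) : ℕ):ℝ)/n) := by
      intro i hi
      have h1 : kk n (γ1 n) + (i+1) ≤ n := by omega
      have h0 : kk n (γ1 n) + i ≤ n := by omega
      apply hfun_intInt
      · refine ⟨by positivity, ?_⟩
        rw [div_le_one hn0]
        exact_mod_cast h0
      · refine ⟨by positivity, ?_⟩
        rw [div_le_one hn0]
        exact_mod_cast h1
    have hsum := intervalIntegral.sum_integral_adjacent_intervals (f := hfun) (μ := volume)
      (a := fun i => ((kk n (γ1 n) + i : ℕ):ℝ)/n) hadj
    simp only [Nat.add_zero] at hsum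
    rw [show kk n (γ1 n) + (kk n (γ2 n) - kk n (γ1 n)) = kk n (γ2 n) from by omega] at hsum
    calc S n / n = ∑ i ∈ Finset.range (kk n (γ2 n) - kk n (γ1 n)),
          hfun (((kk n (γ1 n) + i + 1 : ℕ):ℝ)/n) * (1/n) := by
          simp only [hSdef]
          rw [Finset.sum_div]
          exact Finset.sum_congr rfl (fun i _ => div_eq_mul_one_div _ _)
      _ ≤ ∑ i ∈ Finset.range (kk n (γ2 n) - kk n (γ1 n)),
          ∫ x in (((kk n (γ1 n) + i : ℕ):ℝ)/n)..(((kk n (γ1 n) + (i+1) : ℕ):ℝ)/n), hfun x := by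
          apply Finset.sum_le_sum
          intro i hi
          rw [Finset.mem_range] at hi
          have hstep := step_lower n (kk n (γ1 n) + i + 1) hn2 (by omega) (by omega)
          have e2 : ((kk n (γ1 n) + i + 1 : ℕ):ℝ) - 1 = ((kk n (γ1 n) + i : ℕ):ℝ) := by
            push_cast; ring
          have e3 : ((kk n (γ1 n) + i + 1 : ℕ):ℝ) = ((kk n (γ1 n) + (i+1) : ℕ):ℝ) := by
            push_cast; ring
          rw [e2] at hstep
          calc hfun (((kk n (γ1 n) + i + 1 : ℕ):ℝ)/n) * (1/n)
              ≤ ∫ x in (((kk n (γ1 n) + i : ℕ):ℝ)/n)..(((kk n (γ1 n) + i + 1 : ℕ):ℝ)/n),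
                  hfun x := hstep
            _ = _ := by rw [e3]
      _ = _ := hsum
  -- lower bound
  have hlow : ∀ᶠ n in atTop,
      (∫ x in ((((kk n (γ1 n) : ℕ):ℝ)+1)/n)..((((kk n (γ2 n) : ℕ):ℝ)+1)/n), hfun x)
        ≤ S n / n := by
    filter_upwards [eventually_ge_atTop 2, hevlt] with n hn2 hlt
    have hn1 : 1 ≤ n := by omega
    have hn0 : (0:ℝ) < n := by exact_mod_cast (by omega : 0 < n)
    have hkq := hk2le n hn1
    have hadj : ∀ i, i < kk n (γ2 n) - kk n (γ1 n) →
        IntervalIntegrable hfun volume (((kk n (γ1 n) + i + 1 : ℕ):ℝ)/n)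
          (((kk n (γ1 n) + (i+1) + 1 : ℕ):ℝ)/n) := by
      intro i hi
      have h1 : kk n (γ1 n) + (i+1) + 1 ≤ n := by omega
      have h0 : kk n (γ1 n) + i + 1 ≤ n := by omega
      apply hfun_intInt
      · refine ⟨by positivity, ?_⟩
        rw [div_le_one hn0]
        exact_mod_cast h0
      · refine ⟨by positivity, ?_⟩
        rw [div_le_one hn0]
        exact_mod_cast h1
    have hsum := intervalIntegral.sum_integral_adjacent_intervals (f := hfun) (μ := volume)
      (a := fun i => ((kk n (γ1 n) + i + 1 : ℕ):ℝ)/n) hadj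
    simp only [Nat.add_zero] at hsum
    rw [show kk n (γ1 n) + (kk n (γ2 n) - kk n (γ1 n)) = kk n (γ2 n) from by omega] at hsum
    have e0 : ((kk n (γ1 n) + 1 : ℕ):ℝ)/n = (((kk n (γ1 n) : ℕ):ℝ)+1)/n := by push_cast; ring
    have e1 : ((kk n (γ2 n) + 1 : ℕ):ℝ)/n = (((kk n (γ2 n) : ℕ):ℝ)+1)/n := by push_cast; ring
    rw [e0, e1] at hsum
    calc (∫ x in ((((kk n (γ1 n) : ℕ):ℝ)+1)/n)..((((kk n (γ2 n) : ℕ):ℝ)+1)/n), hfun x)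
        = ∑ i ∈ Finset.range (kk n (γ2 n) - kk n (γ1 n)),
          ∫ x in (((kk n (γ1 n) + i + 1 : ℕ):ℝ)/n)..(((kk n (γ1 n) + (i+1) + 1 : ℕ):ℝ)/n),
            hfun x := hsum.symm
      _ ≤ ∑ i ∈ Finset.range (kk n (γ2 n) - kk n (γ1 n)),
          hfun (((kk n (γ1 n) + i + 1 : ℕ):ℝ)/n) * (1/n) := by
          apply Finset.sum_le_sum
          intro i hi
          rw [Finset.mem_range] at hi
          have hstep := step_upper n (kk n (γ1 n) + i + 1) hn2 (by omega) (by omega)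
          have e4 : ((kk n (γ1 n) + i + 1 : ℕ):ℝ) + 1 = ((kk n (γ1 n) + (i+1) + 1 : ℕ):ℝ) := by
            push_cast; ring
          rw [e4] at hstep
          exact hstep
      _ = S n / n := by
          simp only [hSdef]
          rw [Finset.sum_div]
          exact (Finset.sum_congr rfl (fun i _ => div_eq_mul_one_div _ _)).symm
  -- memberships for continuity of the primitive
  have hm1 : ∀ᶠ n : ℕ in atTop, ((kk n (γ1 n) : ℕ):ℝ)/n ∈ Set.Icc (0:ℝ) 1 := by
    filter_upwards [eventually_ge_atTop 1] with n hn1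
    have hn0 : (0:ℝ) < n := by exact_mod_cast hn1
    refine ⟨by positivity, ?_⟩
    rw [div_le_one hn0]
    exact_mod_cast le_trans (hk1le n hn1) (Nat.sub_le n 1)
  have hm2 : ∀ᶠ n : ℕ in atTop, ((kk n (γ2 n) : ℕ):ℝ)/n ∈ Set.Icc (0:ℝ) 1 := by
    filter_upwards [eventually_ge_atTop 1] with n hn1
    have hn0 : (0:ℝ) < n := by exact_mod_cast hn1
    refine ⟨by positivity, ?_⟩
    rw [div_le_one hn0]
    exact_mod_cast le_trans (hk2le n hn1) (Nat.sub_le n 1)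
  have hm1p : ∀ᶠ n : ℕ in atTop, (((kk n (γ1 n) : ℕ):ℝ)+1)/n ∈ Set.Icc (0:ℝ) 1 := by
    filter_upwards [eventually_ge_atTop 1] with n hn1
    have hn0 : (0:ℝ) < n := by exact_mod_cast hn1
    refine ⟨by positivity, ?_⟩
    rw [div_le_one hn0]
    have : kk n (γ1 n) + 1 ≤ n := by have := hk1le n hn1; omega
    exact_mod_cast this
  have hm2p : ∀ᶠ n : ℕ in atTop, (((kk n (γ2 n) : ℕ):ℝ)+1)/n ∈ Set.Icc (0:ℝ) 1 := by
    filter_upwards [eventually_ge_atTop 1] with n hn1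
    have hn0 : (0:ℝ) < n := by exact_mod_cast hn1
    refine ⟨by positivity, ?_⟩
    rw [div_le_one hn0]
    have : kk n (γ2 n) + 1 ≤ n := by have := hk2le n hn1; omega
    exact_mod_cast this
  have h0mem : (0:ℝ) ∈ Set.Icc (0:ℝ) 1 := ⟨le_refl 0, zero_le_one⟩
  have hamem : a ∈ Set.Icc (0:ℝ) 1 := ⟨ha0, ha1⟩
  have hbmem : b ∈ Set.Icc (0:ℝ) 1 := ⟨hb0, hb1⟩
  have hFab : (∫ x in (0:ℝ)..b, hfun x) - (∫ x in (0:ℝ)..a, hfun x) = I := by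
    rw [hIdef]
    exact intervalIntegral.integral_interval_sub_left
      (hfun_intInt 0 b h0mem hbmem) (hfun_intInt 0 a h0mem hamem)
  have hupt : Tendsto (fun n =>
      ∫ x in (((kk n (γ1 n) : ℕ):ℝ)/n)..(((kk n (γ2 n) : ℕ):ℝ)/n), hfun x)
      atTop (nhds I) := by
    have hA := F_tendsto _ a hamem t1 hm1
    have hB := F_tendsto _ b hbmem t2 hm2
    have hBA := hB.sub hA
    rw [hFab] at hBA
    apply hBA.congr'
    filter_upwards [hm1, hm2] with n h1 h2
    exact intervalIntegral.integral_interval_sub_left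
      (hfun_intInt 0 _ h0mem h2) (hfun_intInt 0 _ h0mem h1)
  have hlowt : Tendsto (fun n =>
      ∫ x in ((((kk n (γ1 n) : ℕ):ℝ)+1)/n)..((((kk n (γ2 n) : ℕ):ℝ)+1)/n), hfun x)
      atTop (nhds I) := by
    have hA := F_tendsto _ a hamem t1p hm1p
    have hB := F_tendsto _ b hbmem t2p hm2p
    have hBA := hB.sub hA
    rw [hFab] at hBA
    apply hBA.congr'
    filter_upwards [hm1p, hm2p] with n h1 h2
    exact intervalIntegral.integral_interval_sub_left
      (hfun_intInt 0 _ h0mem h2) (hfun_intInt 0 _ h0mem h1)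
  have hS : Tendsto (fun n => S n / n) atTop (nhds I) :=
    tendsto_of_tendsto_of_tendsto_of_le_of_le' hlowt hupt hlow hup
  have hinv : Tendsto (fun n : ℕ => (n:ℝ)/(((kk n (γ2 n) : ℕ):ℝ) - ((kk n (γ1 n) : ℕ):ℝ)))
      atTop (nhds (b-a)⁻¹) := by
    have h := t3.inv₀ (ne_of_gt hba)
    exact h.congr (fun n => inv_div _ _)
  have hMt : Tendsto (fun n : ℕ => (S n / n) *
      ((n:ℝ)/(((kk n (γ2 n) : ℕ):ℝ) - ((kk n (γ1 n) : ℕ):ℝ)))) atTop (nhds M) := by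
    have := hS.mul hinv
    rw [show I * (b-a)⁻¹ = M from by rw [hMdef]; ring] at this
    exact this
  -- the crossing identity
  have hueq : ∀ᶠ n in atTop, hfun (u n) = (S n / n) *
      ((n:ℝ)/(((kk n (γ2 n) : ℕ):ℝ) - ((kk n (γ1 n) : ℕ):ℝ))) := by
    filter_upwards [hcross, eventually_ge_atTop 2, hevlt] with n hcr hn2 hlt
    have hn1 : 1 ≤ n := by omega
    have hn0 : (0:ℝ) < n := by exact_mod_cast (by omega : 0 < n)
    have hkq := hk2le n hn1
    have hu01 : u n ∈ Set.Ioo (0:ℝ) 1 :=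
      ⟨lt_of_le_of_lt ha0 hcr.1.1, lt_of_lt_of_le hcr.1.2 hb1⟩
    have heq : (n:ℝ) * (((n-1).choose (kk n (γ1 n)) : ℕ):ℝ) * (u n) ^ (kk n (γ1 n))
          * (1 - u n) ^ (n-1-kk n (γ1 n))
        = (n:ℝ) * (((n-1).choose (kk n (γ2 n)) : ℕ):ℝ) * (u n) ^ (kk n (γ2 n))
          * (1 - u n) ^ (n-1-kk n (γ2 n)) := by
      have h := hcr.2
      rw [dphi_eq, dphi_eq] at h
      exact h
    have hid := cross_identity n _ _ (u n) hn2 (le_of_lt hlt) hkq hu01 heq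
    have htel := telescope n (kk n (γ1 n)) (kk n (γ2 n)) hn2 (le_of_lt hlt) hkq
    rw [← htel] at hid
    have hdpos : (0:ℝ) < ((kk n (γ2 n) : ℕ):ℝ) - ((kk n (γ1 n) : ℕ):ℝ) := by
      have : ((kk n (γ1 n) : ℕ):ℝ) < ((kk n (γ2 n) : ℕ):ℝ) := by exact_mod_cast hlt
      linarith
    have hfrac : (S n / n) * ((n:ℝ)/(((kk n (γ2 n) : ℕ):ℝ) - ((kk n (γ1 n) : ℕ):ℝ)))
        = S n / (((kk n (γ2 n) : ℕ):ℝ) - ((kk n (γ1 n) : ℕ):ℝ)) := by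
      field_simp
    rw [hfrac, eq_div_iff (ne_of_gt hdpos)]
    have hSn : S n = ∑ i ∈ Finset.range (kk n (γ2 n) - kk n (γ1 n)),
        hfun (((kk n (γ1 n) + i + 1 : ℕ) : ℝ)/n) := by rw [hSdef]
    rw [hSn]
    linear_combination hid
  have hhu : Tendsto (fun n => hfun (u n)) atTop (nhds M) :=
    hMt.congr' (EventuallyEq.symm hueq)
  -- the limit point
  set L : ℝ := 1/(1 + Real.exp M) with hLdef
  have hexp : 0 < Real.exp M := Real.exp_pos M
  have hL0 : 0 < L := by rw [hLdef]; positivity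
  have hL1 : L < 1 := by
    rw [hLdef, div_lt_one (by positivity)]
    linarith
  have hfunL : hfun L = M := by
    have h1L : 1 - L = Real.exp M/(1 + Real.exp M) := by
      rw [hLdef]; field_simp; ring
    show Real.log (1 - L) - Real.log L = M
    rw [h1L, hLdef, Real.log_div (ne_of_gt hexp) (by positivity), one_div, Real.log_inv,
      Real.log_exp]
    ring
  have hintab : IntervalIntegrable hfun volume a b := hfun_intInt a b hamem hbmem
  have hMlt : 0 < a → M < hfun a := by
    intro ha0'
    have hpos : 0 < ∫ x in a..b, (hfun a - hfun x) := by
      apply intervalIntegral.intervalIntegral_pos_of_pos_on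
      · exact intervalIntegrable_const.sub hintab
      · intro x hx
        have hx01 : x ∈ Set.Ioo (0:ℝ) 1 := ⟨lt_trans ha0' hx.1, lt_of_lt_of_le hx.2 hb1⟩
        have ha01 : a ∈ Set.Ioo (0:ℝ) 1 := ⟨ha0', lt_of_lt_of_le hab hb1⟩
        have := hfun_strictAntiOn ha01 hx01 hx.1
        linarith
      · exact hab
    rw [intervalIntegral.integral_sub intervalIntegrable_const hintab,
      intervalIntegral.integral_const, smul_eq_mul] at hpos
    rw [hMdef, show (1/(b-a))*I = I/(b-a) from by ring, div_lt_iff₀ hba]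
    linarith
  have hMgt : b < 1 → hfun b < M := by
    intro hb1'
    have hpos : 0 < ∫ x in a..b, (hfun x - hfun b) := by
      apply intervalIntegral.intervalIntegral_pos_of_pos_on
      · exact hintab.sub intervalIntegrable_const
      · intro x hx
        have hx01 : x ∈ Set.Ioo (0:ℝ) 1 := ⟨lt_of_le_of_lt ha0 hx.1, lt_trans hx.2 hb1'⟩
        have hb01 : b ∈ Set.Ioo (0:ℝ) 1 := ⟨lt_of_le_of_lt ha0 hab, hb1'⟩
        have := hfun_strictAntiOn hx01 hb01 hx.2
        linarith
      · exact hab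
    rw [intervalIntegral.integral_sub hintab intervalIntegrable_const,
      intervalIntegral.integral_const, smul_eq_mul] at hpos
    rw [hMdef, show (1/(b-a))*I = I/(b-a) from by ring, lt_div_iff₀ hba]
    linarith
  have hLa : a < L := by
    rcases eq_or_lt_of_le ha0 with h0 | h0
    · rw [← h0]; exact hL0
    by_contra hcon
    push_neg at hcon
    have ha01 : a ∈ Set.Ioo (0:ℝ) 1 := ⟨h0, lt_of_lt_of_le hab hb1⟩
    have h2 := hfun_strictAntiOn.antitoneOn ⟨hL0, hL1⟩ ha01 hcon
    have h3 := hMlt h0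
    rw [hfunL] at h2
    linarith
  have hLb : L < b := by
    rcases eq_or_lt_of_le hb1 with h1 | h1
    · rw [h1]; exact hL1
    by_contra hcon
    push_neg at hcon
    have hb01 : b ∈ Set.Ioo (0:ℝ) 1 := ⟨lt_of_le_of_lt ha0 hab, h1⟩
    have h2 := hfun_strictAntiOn.antitoneOn hb01 ⟨hL0, hL1⟩ hcon
    have h3 := hMgt h1
    rw [hfunL] at h2
    linarith
  have hut : Tendsto u atTop (nhds L) := by
    rw [tendsto_order]
    constructor
    · intro c hc
      rcases le_or_gt c a with hca | hca
      · filter_upwards [hcross] with n hn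
        exact lt_of_le_of_lt hca hn.1.1
      · have hc01 : c ∈ Set.Ioo (0:ℝ) 1 :=
          ⟨lt_of_le_of_lt ha0 hca, lt_trans hc hL1⟩
        have hcL : hfun L < hfun c := hfun_strictAntiOn hc01 ⟨hL0, hL1⟩ hc
        rw [hfunL] at hcL
        have hev := hhu.eventually_lt_const hcL
        filter_upwards [hev, hcross] with n h1 h2
        by_contra hcon
        push_neg at hcon
        have hu01 : u n ∈ Set.Ioo (0:ℝ) 1 :=
          ⟨lt_of_le_of_lt ha0 h2.1.1, lt_of_lt_of_le h2.1.2 hb1⟩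
        have := hfun_strictAntiOn.antitoneOn hu01 hc01 hcon
        linarith
    · intro c hc
      rcases le_or_gt b c with hcb | hcb
      · filter_upwards [hcross] with n hn
        exact lt_of_lt_of_le hn.1.2 hcb
      · have hc01 : c ∈ Set.Ioo (0:ℝ) 1 := ⟨lt_trans hL0 hc, lt_of_lt_of_le hcb hb1⟩
        have hcL : hfun c < hfun L := hfun_strictAntiOn ⟨hL0, hL1⟩ hc01 hc
        rw [hfunL] at hcL
        have hev := hhu.eventually_const_lt hcL
        filter_upwards [hev, hcross] with n h1 h2
        by_contra hcon
        push_neg at hcon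
        have hu01 : u n ∈ Set.Ioo (0:ℝ) 1 :=
          ⟨lt_of_le_of_lt ha0 h2.1.1, lt_of_lt_of_le h2.1.2 hb1⟩
        have := hfun_strictAntiOn.antitoneOn hc01 hu01 hcon
        linarith
  refine ⟨L, ⟨hLa, hLb⟩, hut, ?_, ?_⟩
  · rw [hIeq, ← hMdef, Real.log_div (by linarith) (ne_of_gt hL0)]
    exact hfunL
  · intro L' hL' hlog
    rw [hIeq, ← hMdef] at hlog
    have hL'01 : L' ∈ Set.Ioo (0:ℝ) 1 :=
      ⟨lt_of_le_of_lt ha0 hL'.1, lt_of_lt_of_le hL'.2 hb1⟩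
    have hfL' : hfun L' = M := by
      show Real.log (1 - L') - Real.log L' = M
      rw [← Real.log_div (by linarith [hL'01.2]) (ne_of_gt hL'01.1)]
      exact hlog
    exact hfun_strictAntiOn.injOn hL'01 ⟨hL0, hL1⟩ (by rw [hfL', hfunL])
end
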